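/- arXiv:2101.09867 — 4 statements merged into one kernel-verified Lean document; each statement's English description precedes it below -/
import Mathlib

section
/- Let j, k ≥ 0 be integers with j ≥ 1, and let M_1, …, M_j ∈ C^∞([0,∞), ℝ). Set p(j,k) := max{k-j+1, 1}, q(j,k) := min{k, j}, and C(j,k,t) := ∑_{l=max{0, j-1-k}}^{j-1} t^l/l!. Then for every t > 0, |d^k/dt^k (M_1 * ⋯ * M_j)(t)| ≤ C(j,k,t) · (∏_{1 ≤ l ≤ q(j,k)} ‖M_l‖_{C^{p(j,k)}([0,t])}) · (∏_{q(j,k) < l ≤ j} ‖M_l‖_{C^{p(j,k)-1}([0,t])}). -/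
open Set MeasureTheory

/-- Convolution on `[0,∞)` (via signed interval integral): `(f*g)(t) = ∫_0^t f(t-s) g(s) ds`. -/
noncomputable def conv (f g : ℝ → ℝ) : ℝ → ℝ :=
  fun t => ∫ s in (0:ℝ)..t, f (t - s) * g s

/-- `j`-fold convolution power of `M`, with the conventions `M^{*0} = 0` and `M^{*1} = M`. -/
noncomputable def convPow (M : ℝ → ℝ) : ℕ → ℝ → ℝ
  | 0 => fun _ => 0
  | 1 => M
  | (j+2) => conv M (convPow M (j+1))

/-- The norm `‖f‖_{C^k([0,t])} = ∑_{l=0}^k max_{0 ≤ τ ≤ t} |f^{(l)}(τ)|`,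
derivatives taken within `[0,∞)`. -/
noncomputable def CkNorm (k : ℕ) (t : ℝ) (f : ℝ → ℝ) : ℝ :=
  ∑ l ∈ Finset.range (k+1), ⨆ τ : Set.Icc (0:ℝ) t, |iteratedDerivWithin l f (Set.Ici 0) τ|

/-- Iterated convolution `M_1 * ⋯ * M_j` of a list of functions (empty list ↦ 0). -/
noncomputable def convList : List (ℝ → ℝ) → ℝ → ℝ
  | [] => fun _ => 0
  | [f] => f
  | f :: g :: fs => conv f (convList (g :: fs))


section Aux
open intervalIntegral

noncomputable def ext0 (f : ℝ → ℝ) : ℝ → ℝ := fun x => f (max x 0)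

lemma ext0_continuous {f : ℝ → ℝ} (hf : ContinuousOn f (Ici 0)) : Continuous (ext0 f) :=
  hf.comp_continuous (continuous_id.max continuous_const) (fun x => le_max_right x 0)

lemma ext0_eq {f : ℝ → ℝ} {x : ℝ} (hx : 0 ≤ x) : ext0 f x = f x := by
  simp [ext0, max_eq_left hx]

lemma conv_comm (f g : ℝ → ℝ) (t : ℝ) : conv f g t = conv g f t := by
  unfold conv
  have h := intervalIntegral.integral_comp_sub_left (a := 0) (b := t)
    (fun s => f (t - s) * g s) t
  simp only [sub_sub_cancel, sub_zero, sub_self] at h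
  have h2 : ∫ s in (0:ℝ)..t, g (t - s) * f s = ∫ s in (0:ℝ)..t, f s * g (t - s) := by
    apply intervalIntegral.integral_congr; intro s _; ring
  rw [h2, h]

lemma conv_zero_at_zero (f g : ℝ → ℝ) : conv f g 0 = 0 := by
  simp [conv]

lemma conv_ext0 {f g : ℝ → ℝ} {t : ℝ} (ht : 0 ≤ t) :
    conv f g t = ∫ s in (0:ℝ)..t, ext0 f (t - s) * ext0 g s := by
  unfold conv
  apply intervalIntegral.integral_congr
  intro s hs
  rw [uIcc_of_le ht] at hs
  show f (t - s) * g s = ext0 f (t - s) * ext0 g s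
  rw [ext0_eq (by linarith [hs.1, hs.2] : (0:ℝ) ≤ t - s), ext0_eq hs.1]

lemma conv_continuousOn {f g : ℝ → ℝ} (hf : ContinuousOn f (Ici 0))
    (hg : ContinuousOn g (Ici 0)) : ContinuousOn (conv f g) (Ici 0) := by
  have : Continuous fun t => ∫ s in (0:ℝ)..t, ext0 f (t - s) * ext0 g s := by
    apply intervalIntegral.continuous_parametric_intervalIntegral_of_continuous
      (f := fun t s => ext0 f (t - s) * ext0 g s)
    · exact (((ext0_continuous hf).comp (continuous_fst.sub continuous_snd)).mul
        ((ext0_continuous hg).comp continuous_snd))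
    · exact continuous_id
  exact (this.continuousOn).congr (fun t ht => conv_ext0 ht)

lemma triswap (K : ℝ → ℝ → ℝ) (hK : Continuous (Function.uncurry K)) {τ : ℝ} (hτ : 0 ≤ τ) :
    (∫ s in (0:ℝ)..τ, ∫ u in (0:ℝ)..s, K s u) = ∫ u in (0:ℝ)..τ, ∫ s in u..τ, K s u := by
  obtain ⟨C, hC⟩ : ∃ C, ∀ p ∈ Icc (0:ℝ) τ ×ˢ Icc (0:ℝ) τ, ‖Function.uncurry K p‖ ≤ C := by
    obtain ⟨C, hC⟩ := (isCompact_Icc.prod isCompact_Icc).exists_bound_of_continuousOn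
      hK.continuousOn
    exact ⟨C, hC⟩
  set H : ℝ × ℝ → ℝ := fun p => if 0 < p.2 ∧ p.2 ≤ p.1 then K p.1 p.2 else 0 with hH
  have hHmeas : AEStronglyMeasurable H
      ((volume.restrict (Ioc 0 τ)).prod (volume.restrict (Ioc 0 τ))) := by
    have hS : MeasurableSet {p : ℝ × ℝ | 0 < p.2 ∧ p.2 ≤ p.1} :=
      (measurableSet_lt measurable_const measurable_snd).inter
        (measurableSet_le measurable_snd measurable_fst)
    have : H = Set.indicator {p : ℝ × ℝ | 0 < p.2 ∧ p.2 ≤ p.1} (Function.uncurry K) := by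
      ext p; by_cases h : 0 < p.2 ∧ p.2 ≤ p.1 <;> simp [hH, h, Set.indicator, Function.uncurry]
    rw [this]
    exact ((hK.stronglyMeasurable.indicator hS).aestronglyMeasurable)
  have hHint : Integrable H ((volume.restrict (Ioc 0 τ)).prod (volume.restrict (Ioc 0 τ))) := by
    apply Integrable.mono' (integrable_const (max C 0)) hHmeas
    rw [Measure.prod_restrict]
    rw [ae_restrict_iff' (measurableSet_Ioc.prod measurableSet_Ioc)]
    filter_upwards with p hp
    by_cases h : 0 < p.2 ∧ p.2 ≤ p.1
    · simp only [hH, if_pos h]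
      refine le_trans ?_ (le_max_left _ _)
      exact hC p ⟨⟨hp.1.1.le, hp.1.2⟩, ⟨hp.2.1.le, hp.2.2⟩⟩
    · simp [hH, if_neg h, le_max_right]
  have swap := MeasureTheory.integral_integral_swap (f := fun s u => H (s, u)) (by exact hHint)
  -- LHS identification
  have hL : (∫ s in (0:ℝ)..τ, ∫ u in (0:ℝ)..s, K s u)
      = ∫ s in Ioc (0:ℝ) τ, ∫ u in Ioc (0:ℝ) τ, H (s, u) := by
    rw [intervalIntegral.integral_of_le hτ]
    apply setIntegral_congr_fun measurableSet_Ioc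
    intro s hs
    show (∫ u in (0:ℝ)..s, K s u) = ∫ u in Ioc (0:ℝ) τ, H (s, u)
    rw [intervalIntegral.integral_of_le hs.1.le]
    have : ∀ u, H (s, u) = (Ioc (0:ℝ) s).indicator (fun u => K s u) u := by
      intro u; by_cases h : u ∈ Ioc (0:ℝ) s
      · simp only [hH, Set.indicator_of_mem h]; rw [if_pos ⟨h.1, h.2⟩]
      · simp only [hH, Set.indicator_of_notMem h]
        rw [if_neg (by simpa [Ioc, mem_setOf_eq] using h)]
    simp_rw [this]
    rw [setIntegral_indicator measurableSet_Ioc]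
    congr 1
    rw [Set.Ioc_inter_Ioc]
    simp [hs.2]
  have hR : (∫ u in (0:ℝ)..τ, ∫ s in u..τ, K s u)
      = ∫ u in Ioc (0:ℝ) τ, ∫ s in Ioc (0:ℝ) τ, H (s, u) := by
    rw [intervalIntegral.integral_of_le hτ]
    apply setIntegral_congr_fun measurableSet_Ioc
    intro u hu
    show (∫ s in u..τ, K s u) = ∫ s in Ioc (0:ℝ) τ, H (s, u)
    rw [intervalIntegral.integral_of_le hu.2]
    have : ∀ s, H (s, u) = (Ici u).indicator (fun s => K s u) s := by
      intro s; by_cases h : s ∈ Ici u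
      · simp only [Set.indicator_of_mem h]; show (if 0 < u ∧ u ≤ s then K s u else 0) = K s u
        rw [if_pos ⟨hu.1, h⟩]
      · simp only [Set.indicator_of_notMem h]
        show (if 0 < u ∧ u ≤ s then K s u else 0) = 0
        rw [if_neg (by intro hc; exact h hc.2)]
    simp_rw [this]
    rw [setIntegral_indicator measurableSet_Ici]
    have : Ioc (0:ℝ) τ ∩ Ici u = Icc u τ := by
      ext s; simp only [mem_inter_iff, mem_Ioc, mem_Ici, mem_Icc]
      constructor
      · rintro ⟨⟨_, h2⟩, h3⟩; exact ⟨h3, h2⟩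
      · rintro ⟨h1, h2⟩; exact ⟨⟨lt_of_lt_of_le hu.1 h1, h2⟩, h1⟩
    rw [this, integral_Icc_eq_integral_Ioc]
  rw [hL, hR, swap]

noncomputable abbrev dW (f : ℝ → ℝ) : ℝ → ℝ := derivWithin f (Ici 0)

lemma dW_contDiffOn {g : ℝ → ℝ} (hg : ContDiffOn ℝ (⊤:ℕ∞) g (Ici 0)) :
    ContDiffOn ℝ (⊤:ℕ∞) (dW g) (Ici 0) :=
  hg.derivWithin (uniqueDiffOn_Ici 0) (by simp)

lemma hasDerivWithinAt_of_mem {g : ℝ → ℝ} (hg : ContDiffOn ℝ (⊤:ℕ∞) g (Ici 0)) {x : ℝ}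
    (hx : 0 ≤ x) : HasDerivWithinAt g (dW g x) (Ici 0) x :=
  (((hg.differentiableOn (by norm_num)) x hx).hasDerivWithinAt)

lemma ftc_g {g : ℝ → ℝ} (hg : ContDiffOn ℝ (⊤:ℕ∞) g (Ici 0)) {s : ℝ} (hs : 0 ≤ s) :
    (∫ u in (0:ℝ)..s, ext0 (dW g) u) = g s - g 0 := by
  have h1 : (∫ u in (0:ℝ)..s, ext0 (dW g) u) = ∫ u in (0:ℝ)..s, dW g u := by
    apply intervalIntegral.integral_congr
    intro u hu; rw [uIcc_of_le hs] at hu; exact ext0_eq hu.1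
  rw [h1]
  apply intervalIntegral.integral_eq_sub_of_hasDeriv_right_of_le hs
  · exact hg.continuousOn.mono (fun x (hx : x ∈ Icc 0 s) => hx.1)
  · intro x hx
    exact (hasDerivWithinAt_of_mem hg (le_of_lt hx.1)).mono (Ioi_subset_Ici hx.1.le)
  · exact ((dW_contDiffOn hg).continuousOn.mono (fun x hx => by
      rw [uIcc_of_le hs] at hx; exact hx.1)).intervalIntegrable

lemma ID1 {f g : ℝ → ℝ} (hf : ContinuousOn f (Ici 0)) (hg : ContDiffOn ℝ (⊤:ℕ∞) g (Ici 0))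
    {τ : ℝ} (hτ : 0 ≤ τ) :
    conv f g τ = g 0 * (∫ x in (0:ℝ)..τ, ext0 f x)
      + ∫ σ in (0:ℝ)..τ, ext0 (conv f (dW g)) σ := by
  have hF : Continuous (ext0 f) := ext0_continuous hf
  have hG' : Continuous (ext0 (dW g)) := ext0_continuous (dW_contDiffOn hg).continuousOn
  have hprim : Continuous fun s => ∫ u in (0:ℝ)..s, ext0 (dW g) u := by
    apply intervalIntegral.continuous_parametric_intervalIntegral_of_continuous
      (f := fun _ u => ext0 (dW g) u) (μ := volume)
    · exact hG'.comp continuous_snd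
    · exact continuous_id
  -- step 1: expand g
  have step1 : conv f g τ = (∫ s in (0:ℝ)..τ, ext0 f (τ - s) * g 0)
      + ∫ s in (0:ℝ)..τ, ext0 f (τ - s) * ∫ u in (0:ℝ)..s, ext0 (dW g) u := by
    rw [conv_ext0 hτ, ← intervalIntegral.integral_add]
    · apply intervalIntegral.integral_congr
      intro s hs; rw [uIcc_of_le hτ] at hs
      show ext0 f (τ - s) * ext0 g s
        = ext0 f (τ - s) * g 0 + ext0 f (τ - s) * ∫ u in (0:ℝ)..s, ext0 (dW g) u
      rw [ext0_eq hs.1, ftc_g hg hs.1]; ring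
    · exact ((hF.comp (continuous_const.sub continuous_id)).mul continuous_const).intervalIntegrable _ _
    · exact ((hF.comp (continuous_const.sub continuous_id)).mul hprim).intervalIntegrable _ _
  have e1 : (∫ s in (0:ℝ)..τ, ext0 f (τ - s) * g 0) = g 0 * ∫ x in (0:ℝ)..τ, ext0 f x := by
    rw [intervalIntegral.integral_mul_const, intervalIntegral.integral_comp_sub_left (ext0 f) τ]
    simp [mul_comm]
  -- step 2: two triangle swaps
  have e2 : (∫ s in (0:ℝ)..τ, ext0 f (τ - s) * ∫ u in (0:ℝ)..s, ext0 (dW g) u)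
      = ∫ σ in (0:ℝ)..τ, ext0 (conv f (dW g)) σ := by
    have swapA : (∫ s in (0:ℝ)..τ, ∫ u in (0:ℝ)..s, ext0 f (τ - s) * ext0 (dW g) u)
        = ∫ u in (0:ℝ)..τ, ∫ s in u..τ, ext0 f (τ - s) * ext0 (dW g) u :=
      triswap (fun s u => ext0 f (τ - s) * ext0 (dW g) u) (by
        exact ((hF.comp (continuous_const.sub continuous_fst)).mul
          (hG'.comp continuous_snd))) hτ
    have swapB : (∫ σ in (0:ℝ)..τ, ∫ u in (0:ℝ)..σ, ext0 f (σ - u) * ext0 (dW g) u)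
        = ∫ u in (0:ℝ)..τ, ∫ σ in u..τ, ext0 f (σ - u) * ext0 (dW g) u :=
      triswap (fun σ u => ext0 f (σ - u) * ext0 (dW g) u) (by
        exact ((hF.comp (continuous_fst.sub continuous_snd)).mul
          (hG'.comp continuous_snd))) hτ
    have eA : (∫ s in (0:ℝ)..τ, ext0 f (τ - s) * ∫ u in (0:ℝ)..s, ext0 (dW g) u)
        = ∫ s in (0:ℝ)..τ, ∫ u in (0:ℝ)..s, ext0 f (τ - s) * ext0 (dW g) u := by
      apply intervalIntegral.integral_congr
      intro s _; exact (intervalIntegral.integral_const_mul _ _).symm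
    have eB : (∫ σ in (0:ℝ)..τ, ext0 (conv f (dW g)) σ)
        = ∫ σ in (0:ℝ)..τ, ∫ u in (0:ℝ)..σ, ext0 f (σ - u) * ext0 (dW g) u := by
      apply intervalIntegral.integral_congr
      intro σ hσ; rw [uIcc_of_le hτ] at hσ
      rw [ext0_eq hσ.1, conv_ext0 hσ.1]
    have inner : ∀ u ∈ uIcc (0:ℝ) τ,
        (∫ s in u..τ, ext0 f (τ - s) * ext0 (dW g) u)
          = ∫ σ in u..τ, ext0 f (σ - u) * ext0 (dW g) u := by
      intro u _
      rw [intervalIntegral.integral_mul_const, intervalIntegral.integral_mul_const]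
      congr 1
      rw [intervalIntegral.integral_comp_sub_left (ext0 f) τ,
        intervalIntegral.integral_comp_sub_right (f := ext0 f) (d := u)]
      simp
    rw [eA, swapA, eB, swapB]
    exact intervalIntegral.integral_congr inner
  rw [step1, e1, e2]

lemma conv_hasDerivWithinAt {f g : ℝ → ℝ} (hf : ContinuousOn f (Ici 0))
    (hg : ContDiffOn ℝ (⊤:ℕ∞) g (Ici 0)) {t : ℝ} (ht : 0 ≤ t) :
    HasDerivWithinAt (conv f g) (g 0 * f t + conv f (dW g) t) (Ici 0) t := by
  have hF : Continuous (ext0 f) := ext0_continuous hf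
  have hH : Continuous (ext0 (conv f (dW g))) :=
    ext0_continuous (conv_continuousOn hf (dW_contDiffOn hg).continuousOn)
  have d1 : HasDerivWithinAt (fun τ => ∫ x in (0:ℝ)..τ, ext0 f x) (ext0 f t) (Ici 0) t :=
    (intervalIntegral.integral_hasDerivAt_right (hF.intervalIntegrable _ _)
      hF.stronglyMeasurable.stronglyMeasurableAtFilter hF.continuousAt).hasDerivWithinAt
  have d2 : HasDerivWithinAt (fun τ => ∫ σ in (0:ℝ)..τ, ext0 (conv f (dW g)) σ)
      (ext0 (conv f (dW g)) t) (Ici 0) t :=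
    (intervalIntegral.integral_hasDerivAt_right (hH.intervalIntegrable _ _)
      hH.stronglyMeasurable.stronglyMeasurableAtFilter hH.continuousAt).hasDerivWithinAt
  have dΦ : HasDerivWithinAt
      (fun τ => g 0 * (∫ x in (0:ℝ)..τ, ext0 f x) + ∫ σ in (0:ℝ)..τ, ext0 (conv f (dW g)) σ)
      (g 0 * ext0 f t + ext0 (conv f (dW g)) t) (Ici 0) t :=
    (d1.const_mul (g 0)).add d2
  have := dΦ.congr (fun τ hτ => (ID1 hf hg hτ)) (ID1 hf hg ht)
  rwa [ext0_eq ht, ext0_eq ht] at this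

lemma conv_derivWithin_eq {f g : ℝ → ℝ} (hf : ContinuousOn f (Ici 0))
    (hg : ContDiffOn ℝ (⊤:ℕ∞) g (Ici 0)) {t : ℝ} (ht : t ∈ Ici 0) :
    derivWithin (conv f g) (Ici 0) t = g 0 * f t + conv f (dW g) t :=
  (conv_hasDerivWithinAt hf hg ht).derivWithin (uniqueDiffOn_Ici 0 t ht)

lemma conv_funext_comm (f g : ℝ → ℝ) : conv f g = conv g f := funext (conv_comm f g)

lemma conv_contDiffOn {f g : ℝ → ℝ} (hf : ContDiffOn ℝ (⊤:ℕ∞) f (Ici 0))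
    (hg : ContDiffOn ℝ (⊤:ℕ∞) g (Ici 0)) : ContDiffOn ℝ (⊤:ℕ∞) (conv f g) (Ici 0) := by
  suffices h : ∀ n : ℕ, ∀ f g : ℝ → ℝ, ContDiffOn ℝ (⊤:ℕ∞) f (Ici 0) →
      ContDiffOn ℝ (⊤:ℕ∞) g (Ici 0) → ContDiffOn ℝ n (conv f g) (Ici 0) by
    exact contDiffOn_infty.2 (fun n => h n f g hf hg)
  intro n
  induction n with
  | zero =>
    intro f g hf hg
    have h0 : ContDiffOn ℝ 0 (conv f g) (Ici 0) :=
      contDiffOn_zero.2 (conv_continuousOn hf.continuousOn hg.continuousOn)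
    exact_mod_cast h0
  | succ n IH =>
    intro f g hf hg
    rw [show ((n+1 : ℕ) : WithTop ℕ∞) = (n : WithTop ℕ∞) + 1 by norm_cast,
      contDiffOn_succ_iff_derivWithin (uniqueDiffOn_Ici 0)]
    refine ⟨fun x hx =>
      (conv_hasDerivWithinAt hf.continuousOn hg hx).differentiableWithinAt, by simp, ?_⟩
    have hE : ContDiffOn ℝ n (fun t => g 0 * f t + conv f (dW g) t) (Ici 0) :=
      ((contDiffOn_const.mul (hf.of_le (mod_cast le_top))).add (IH f (dW g) hf (dW_contDiffOn hg)))
    exact hE.congr (fun x hx => conv_derivWithin_eq hf.continuousOn hg hx)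

noncomputable abbrev itD (k : ℕ) (f : ℝ → ℝ) : ℝ → ℝ := iteratedDerivWithin k f (Ici 0)

lemma itD_contDiffOn {g : ℝ → ℝ} (hg : ContDiffOn ℝ (⊤:ℕ∞) g (Ici 0)) (k : ℕ) :
    ContDiffOn ℝ (⊤:ℕ∞) (itD k g) (Ici 0) := by
  induction k with
  | zero => rw [itD, iteratedDerivWithin_zero]; exact hg
  | succ k IH =>
    exact (dW_contDiffOn IH).congr
      (fun x hx => congrFun iteratedDerivWithin_succ x)

lemma itD_succ' {g : ℝ → ℝ} (k : ℕ) {x : ℝ} (hx : x ∈ Ici (0:ℝ)) :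
    itD (k+1) g x = itD k (dW g) x :=
  congrFun iteratedDerivWithin_succ' x

/-- Full symmetric expansion of iterated derivatives of a convolution. -/
lemma conv_itD_expansion {f g : ℝ → ℝ} (hf : ContDiffOn ℝ (⊤:ℕ∞) f (Ici 0))
    (hg : ContDiffOn ℝ (⊤:ℕ∞) g (Ici 0)) (k : ℕ) :
    ∀ t ∈ Ici (0:ℝ), itD k (conv f g) t =
      (∑ i ∈ Finset.range k, itD i g 0 * itD (k-1-i) f t) + conv f (itD k g) t := by
  induction k with
  | zero =>
    intro t _
    rw [itD, iteratedDerivWithin_zero]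
    simp [itD, iteratedDerivWithin_zero]
  | succ k IH =>
    intro t ht
    have hconv : HasDerivWithinAt (conv f (itD k g))
        (itD k g 0 * f t + conv f (itD (k+1) g) t) (Ici 0) t := by
      have := conv_hasDerivWithinAt hf.continuousOn (itD_contDiffOn hg k) ht
      have heq : conv f (dW (itD k g)) t = conv f (itD (k+1) g) t := by
        apply intervalIntegral.integral_congr
        intro s hs
        rw [uIcc_of_le (by exact ht : (0:ℝ) ≤ t)] at hs
        show f (t - s) * dW (itD k g) s = f (t - s) * itD (k+1) g s
        have h3 : itD (k+1) g s = derivWithin (itD k g) (Ici 0) s :=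
          congrFun iteratedDerivWithin_succ s
        rw [h3]
      rwa [heq] at this
    have hsum : HasDerivWithinAt (fun τ => ∑ i ∈ Finset.range k, itD i g 0 * itD (k-1-i) f τ)
        (∑ i ∈ Finset.range k, itD i g 0 * itD (k-i) f t) (Ici 0) t := by
      apply HasDerivWithinAt.fun_sum
      intro i hi
      have hik := Finset.mem_range.1 hi
      have hbase : HasDerivWithinAt (itD (k-1-i) f) (itD (k-i) f t) (Ici 0) t := by
        have h1 := hasDerivWithinAt_of_mem (itD_contDiffOn hf (k-1-i)) ht
        have h2 : dW (itD (k-1-i) f) t = itD (k-i) f t := by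
          have h3 : itD ((k-1-i)+1) f t = derivWithin (itD (k-1-i) f) (Ici 0) t :=
            congrFun iteratedDerivWithin_succ t
          have h4 : itD ((k-1-i)+1) f t = itD (k-i) f t := by congr 1; omega
          exact h3.symm.trans h4
        rwa [h2] at h1
      exact hbase.const_mul _
    have hRHS : HasDerivWithinAt
        (fun τ => (∑ i ∈ Finset.range k, itD i g 0 * itD (k-1-i) f τ) + conv f (itD k g) τ)
        ((∑ i ∈ Finset.range k, itD i g 0 * itD (k-i) f t)
          + (itD k g 0 * f t + conv f (itD (k+1) g) t)) (Ici 0) t := hsum.add hconv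
    have hL : itD (k+1) (conv f g) t
        = derivWithin (itD k (conv f g)) (Ici 0) t :=
      congrFun iteratedDerivWithin_succ t
    rw [hL, derivWithin_congr (fun τ hτ => IH τ hτ) (IH t ht),
      hRHS.derivWithin (uniqueDiffOn_Ici 0 t ht), Finset.sum_range_succ]
    simp only [Nat.add_sub_cancel, Nat.sub_self, itD, iteratedDerivWithin_zero]
    ring

/-- Main identity: peel one derivative onto the head, expand the rest symmetrically. -/
lemma main_identity {f g : ℝ → ℝ} (hf : ContDiffOn ℝ (⊤:ℕ∞) f (Ici 0))
    (hg : ContDiffOn ℝ (⊤:ℕ∞) g (Ici 0)) (k : ℕ) {t : ℝ} (ht : t ∈ Ici (0:ℝ)) :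
    itD (k+1) (conv f g) t = f 0 * itD k g t
      + (∑ i ∈ Finset.range k, itD i g 0 * itD (k-i) f t)
      + conv (dW f) (itD k g) t := by
  have rule1 : Set.EqOn (dW (conv f g)) (fun τ => f 0 * g τ + conv (dW f) g τ) (Ici 0) := by
    intro τ hτ
    show derivWithin (conv f g) (Ici 0) τ = _
    rw [conv_funext_comm f g, conv_derivWithin_eq hg.continuousOn hf hτ]
    show f 0 * g τ + conv g (dW f) τ = f 0 * g τ + conv (dW f) g τ
    rw [conv_funext_comm g (dW f)]
  have h1 : itD (k+1) (conv f g) t = itD k (dW (conv f g)) t := itD_succ' k ht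
  have h2 : itD k (dW (conv f g)) t
      = itD k (fun τ => f 0 * g τ + conv (dW f) g τ) t :=
    iteratedDerivWithin_congr rule1 ht
  have hg' : ContDiffOn ℝ (k:ℕ∞) g (Ici 0) := hg.of_le (mod_cast le_top)
  have hcv : ContDiffOn ℝ (k:ℕ∞) (conv (dW f) g) (Ici 0) :=
    (conv_contDiffOn (dW_contDiffOn hf) hg).of_le (mod_cast le_top)
  have h3 : itD k (fun τ => f 0 * g τ + conv (dW f) g τ) t
      = itD k (fun τ => f 0 * g τ) t + itD k (conv (dW f) g) t := by
    have := iteratedDerivWithin_add (𝕜 := ℝ) (f := fun τ => f 0 * g τ)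
      (g := conv (dW f) g) (s := Ici 0) (n := k) ht (uniqueDiffOn_Ici 0)
      ((contDiffOn_const.mul hg') t ht) (hcv t ht)
    exact this
  have h4 : itD k (fun τ => f 0 * g τ) t = f 0 * itD k g t :=
    iteratedDerivWithin_const_mul ht (uniqueDiffOn_Ici 0) (f 0) (hg' t ht)
  have h5 : itD k (conv (dW f) g) t
      = (∑ i ∈ Finset.range k, itD i g 0 * itD (k-1-i) (dW f) t)
        + conv (dW f) (itD k g) t :=
    conv_itD_expansion (dW_contDiffOn hf) hg k t ht
  have h6 : ∀ i ∈ Finset.range k, itD i g 0 * itD (k-1-i) (dW f) t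
      = itD i g 0 * itD (k-i) f t := by
    intro i hi
    have hik := Finset.mem_range.1 hi
    congr 1
    have := itD_succ' (g := f) (k-1-i) ht
    rw [show k-1-i+1 = k-i by omega] at this
    exact this.symm
  rw [h1, h2, h3, h4, h5, Finset.sum_congr rfl h6]
  ring

/-! ### Sup norms -/

noncomputable def Su (h : ℝ → ℝ) (r : ℕ) (t : ℝ) : ℝ :=
  ⨆ τ : Set.Icc (0:ℝ) t, |iteratedDerivWithin r h (Set.Ici 0) τ|

lemma le_Su {h : ℝ → ℝ} (hh : ContDiffOn ℝ (⊤:ℕ∞) h (Ici 0)) (r : ℕ) {t τ : ℝ}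
    (hτ : τ ∈ Icc (0:ℝ) t) : |itD r h τ| ≤ Su h r t := by
  have hc : ContinuousOn (fun x => |itD r h x|) (Icc 0 t) :=
    ((itD_contDiffOn hh r).continuousOn.mono (fun x hx => hx.1)).abs
  have hbdd : BddAbove (Set.range (fun τ : Set.Icc (0:ℝ) t => |itD r h τ|)) := by
    have himg := (isCompact_Icc (a := (0:ℝ)) (b := t)).bddAbove_image hc
    have : Set.range (fun τ : Set.Icc (0:ℝ) t => |itD r h τ|)
        = (fun x => |itD r h x|) '' (Icc 0 t) := by
      ext y; constructor
      · rintro ⟨⟨x, hx⟩, rfl⟩; exact ⟨x, hx, rfl⟩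
      · rintro ⟨x, hx, rfl⟩; exact ⟨⟨x, hx⟩, rfl⟩
    rwa [this]
  exact le_ciSup hbdd ⟨τ, hτ⟩

lemma Su_nonneg {h : ℝ → ℝ} (hh : ContDiffOn ℝ (⊤:ℕ∞) h (Ici 0)) (r : ℕ) {t : ℝ}
    (ht : 0 ≤ t) : 0 ≤ Su h r t :=
  le_trans (abs_nonneg _) (le_Su hh r ⟨le_refl 0, ht⟩)

lemma Su_mono {h : ℝ → ℝ} (hh : ContDiffOn ℝ (⊤:ℕ∞) h (Ici 0)) (r : ℕ) {s t : ℝ}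
    (hs : 0 ≤ s) (hst : s ≤ t) : Su h r s ≤ Su h r t := by
  have : Nonempty (Set.Icc (0:ℝ) s) := ⟨⟨0, le_refl 0, hs⟩⟩
  exact ciSup_le (fun τ => le_Su hh r ⟨τ.2.1, τ.2.2.trans hst⟩)

/-- Basic convolution bound. -/
lemma conv_abs_le {f h : ℝ → ℝ} (hf : ContinuousOn f (Ici 0)) (hh : ContinuousOn h (Ici 0))
    {t A : ℝ} (ht : 0 ≤ t) (hA : ∀ x ∈ Icc (0:ℝ) t, |f x| ≤ A) {B : ℝ → ℝ}
    (hB : ContinuousOn B (Icc 0 t)) (hhB : ∀ s ∈ Icc (0:ℝ) t, |h s| ≤ B s) :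
    |conv f h t| ≤ A * ∫ s in (0:ℝ)..t, B s := by
  have hA0 : 0 ≤ A := le_trans (abs_nonneg _) (hA 0 ⟨le_refl 0, ht⟩)
  have hcont : ContinuousOn (fun s => f (t - s) * h s) (Icc 0 t) := by
    apply ContinuousOn.mul
    · exact hf.comp (continuous_const.sub continuous_id).continuousOn
        (fun s hs => by simp only [mem_Ici]; linarith [hs.1, hs.2])
    · exact hh.mono (fun x hx => hx.1)
  have h1 : |conv f h t| ≤ ∫ s in (0:ℝ)..t, |f (t - s) * h s| := by
    have := intervalIntegral.norm_integral_le_abs_integral_norm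
      (f := fun s => f (t - s) * h s) (a := 0) (b := t) (μ := volume)
    simp only [Real.norm_eq_abs] at this
    refine le_trans this ?_
    rw [abs_of_nonneg]
    apply intervalIntegral.integral_nonneg ht
    exact fun s _ => abs_nonneg _
  have h2 : (∫ s in (0:ℝ)..t, |f (t - s) * h s|) ≤ ∫ s in (0:ℝ)..t, A * B s := by
    apply intervalIntegral.integral_mono_on ht
    · exact ContinuousOn.intervalIntegrable (by rw [uIcc_of_le ht]; exact hcont.abs)
    · exact ContinuousOn.intervalIntegrable (by rw [uIcc_of_le ht]; exact continuousOn_const.mul hB)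
    · intro s hs
      rw [abs_mul]
      exact mul_le_mul (hA _ ⟨by linarith [hs.1, hs.2], by linarith [hs.1, hs.2]⟩)
        (hhB s hs) (abs_nonneg _) hA0
  rw [intervalIntegral.integral_const_mul] at h2
  exact le_trans h1 h2

/-! ### Monomial bookkeeping -/

def pat (j k : ℕ) : Fin j → ℕ := fun l =>
  if (l : ℕ) + 1 ≤ min k j then max (k + 1 - j) 1 else max (k + 1 - j) 1 - 1

def box (j k : ℕ) : Finset (Fin j → ℕ) :=
  Fintype.piFinset (fun l => Finset.range (pat j k l + 1))

def econd (j k : ℕ) (c : Fin j → ℕ) : Prop :=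
  k ≤ (∑ l, c l) + (j - 1) ∧ (∑ l, c l) ≤ k

instance (j k : ℕ) (c : Fin j → ℕ) : Decidable (econd j k c) := by
  unfold econd; infer_instance

def eexp (j k : ℕ) (c : Fin j → ℕ) : ℕ := (∑ l, c l) + (j - 1) - k

noncomputable def coef (j k : ℕ) (ts : ℝ) (Ms : Fin j → ℝ → ℝ) (c : Fin j → ℕ) : ℝ :=
  if econd j k c then (∏ l, Su (Ms l) (c l) ts) / (Nat.factorial (eexp j k c)) else 0

noncomputable def Mono' (j k : ℕ) (tp ts : ℝ) (Ms : Fin j → ℝ → ℝ) : ℝ :=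
  ∑ c ∈ box j k, coef j k ts Ms c * tp ^ (eexp j k c)

lemma pat_mono {j k₁ k₂ : ℕ} (h : k₁ ≤ k₂) (m : Fin j) : pat j k₁ m ≤ pat j k₂ m := by
  unfold pat
  split_ifs <;> simp only [le_min_iff] at * <;> omega

lemma pat_tail (j k' : ℕ) (m : Fin j) : pat (j+1) (k'+1) m.succ = pat j k' m := by
  unfold pat
  have h1 : (((m.succ : Fin (j+1)) : ℕ) + 1 ≤ min (k'+1) (j+1)) ↔ ((m:ℕ) + 1 ≤ min k' j) := by
    simp only [le_min_iff, Fin.val_succ]; omega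
  have h2 : k' + 1 + 1 - (j+1) = k' + 1 - j := by omega
  rw [h2]
  by_cases h : (m:ℕ) + 1 ≤ min k' j
  · rw [if_pos (h1.2 h), if_pos h]
  · rw [if_neg (fun hc => h (h1.1 hc)), if_neg h]

lemma pat_head (j k' : ℕ) : pat (j+1) (k'+1) 0 = max (k' + 1 - j) 1 := by
  unfold pat
  rw [if_pos (by simp only [Fin.val_zero, le_min_iff]; omega)]
  congr 1
  omega

lemma coef_nonneg {j k : ℕ} {ts : ℝ} (hts : 0 ≤ ts) {Ms : Fin j → ℝ → ℝ}
    (hMs : ∀ i, ContDiffOn ℝ (⊤:ℕ∞) (Ms i) (Ici 0)) (c : Fin j → ℕ) :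
    0 ≤ coef j k ts Ms c := by
  unfold coef
  split_ifs
  · apply div_nonneg _ (by positivity)
    exact Finset.prod_nonneg (fun l _ => Su_nonneg (hMs l) _ hts)
  · exact le_refl 0

lemma coef_mono_ts {j k : ℕ} {s t : ℝ} (hs : 0 ≤ s) (hst : s ≤ t) {Ms : Fin j → ℝ → ℝ}
    (hMs : ∀ i, ContDiffOn ℝ (⊤:ℕ∞) (Ms i) (Ici 0)) (c : Fin j → ℕ) :
    coef j k s Ms c ≤ coef j k t Ms c := by
  unfold coef
  split_ifs with h
  · apply div_le_div_of_nonneg_right ?_ (by positivity)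
    exact Finset.prod_le_prod (fun l _ => Su_nonneg (hMs l) _ hs)
      (fun l _ => Su_mono (hMs l) _ hs hst)
  · exact le_refl 0

lemma Mono'_nonneg {j k : ℕ} {tp ts : ℝ} (htp : 0 ≤ tp) (hts : 0 ≤ ts)
    {Ms : Fin j → ℝ → ℝ} (hMs : ∀ i, ContDiffOn ℝ (⊤:ℕ∞) (Ms i) (Ici 0)) :
    0 ≤ Mono' j k tp ts Ms :=
  Finset.sum_nonneg (fun c _ => mul_nonneg (coef_nonneg hts hMs c) (by positivity))

lemma Mono'_mono {j k : ℕ} {tp tp' ts ts' : ℝ} (htp : 0 ≤ tp) (htp' : tp ≤ tp')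
    (hts : 0 ≤ ts) (hts' : ts ≤ ts') {Ms : Fin j → ℝ → ℝ}
    (hMs : ∀ i, ContDiffOn ℝ (⊤:ℕ∞) (Ms i) (Ici 0)) :
    Mono' j k tp ts Ms ≤ Mono' j k tp' ts' Ms := by
  apply Finset.sum_le_sum
  intro c _
  apply mul_le_mul (coef_mono_ts hts hts' hMs c) (pow_le_pow_left₀ htp htp' _)
    (by positivity) (le_trans (coef_nonneg hts hMs c) (coef_mono_ts hts hts' hMs c))

lemma box_zero_mem {j : ℕ} (hj : 1 ≤ j) {c : Fin j → ℕ} (hc : c ∈ box j 0) :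
    c = fun _ => 0 := by
  funext l
  have h := Fintype.mem_piFinset.1 hc l
  rw [Finset.mem_range] at h
  have hp : pat j 0 l = 0 := by
    unfold pat
    split_ifs with h' <;> simp only [le_min_iff] at * <;> omega
  omega

lemma mono'_zero {j : ℕ} (hj : 1 ≤ j) (tp ts : ℝ) (Ms : Fin j → ℝ → ℝ) :
    Mono' j 0 tp ts Ms = tp ^ (j-1) / (Nat.factorial (j-1)) * ∏ l, Su (Ms l) 0 ts := by
  unfold Mono'
  rw [Finset.sum_eq_single_of_mem (fun _ => 0)]
  · have hsum : (∑ l, (fun _ => 0 : Fin j → ℕ) l) = 0 := by simp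
    unfold coef eexp econd
    simp only [hsum]
    rw [if_pos (by omega)]
    simp only [Nat.zero_add, Nat.sub_zero]
    ring
  · exact Fintype.mem_piFinset.2 (fun l => by simp)
  · intro c hc hne
    exact absurd (box_zero_mem hj hc) hne

lemma Mono'_integral {j k : ℕ} {t ts : ℝ} (Ms : Fin j → ℝ → ℝ) :
    (∫ s in (0:ℝ)..t, Mono' j k s ts Ms)
      = ∑ c ∈ box j k, coef j k ts Ms c * (t ^ (eexp j k c + 1) / (eexp j k c + 1)) := by
  unfold Mono'
  rw [intervalIntegral.integral_finset_sum (f := fun c s => coef j k ts Ms c * s ^ eexp j k c) (fun c _ =>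
    ((continuous_const.mul (continuous_pow _)).intervalIntegrable _ _))]
  apply Finset.sum_congr rfl
  intro c _
  rw [intervalIntegral.integral_const_mul, integral_pow]
  congr 1
  rw [zero_pow (by omega)]
  push_cast
  ring

lemma Mono'_continuous {j k : ℕ} {ts : ℝ} (Ms : Fin j → ℝ → ℝ) :
    Continuous (fun s => Mono' j k s ts Ms) := by
  unfold Mono'
  exact continuous_finset_sum _ (fun c _ => continuous_const.mul (continuous_pow _))

/-! ### convList facts -/

lemma convList_peel {j : ℕ} (hj : 1 ≤ j) (Ms : Fin (j+1) → ℝ → ℝ) :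
    convList (List.ofFn Ms)
      = conv (Ms 0) (convList (List.ofFn (fun m : Fin j => Ms m.succ))) := by
  cases j with
  | zero => omega
  | succ m =>
    rw [List.ofFn_succ (f := Ms), List.ofFn_succ (f := fun m : Fin (m+1) => Ms m.succ)]
    rfl

lemma convList_one (Ms : Fin 1 → ℝ → ℝ) : convList (List.ofFn Ms) = Ms 0 := by
  rw [List.ofFn_succ (f := Ms), List.ofFn_zero]
  rfl

lemma convList_contDiffOn : ∀ (j : ℕ), 1 ≤ j → ∀ (Ms : Fin j → ℝ → ℝ),
    (∀ i, ContDiffOn ℝ (⊤:ℕ∞) (Ms i) (Ici 0)) →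
    ContDiffOn ℝ (⊤:ℕ∞) (convList (List.ofFn Ms)) (Ici 0) := by
  intro j
  induction j with
  | zero => omega
  | succ j IH =>
    intro _ Ms hMs
    rcases Nat.eq_zero_or_pos j with hj | hj
    · subst hj
      rw [convList_one]
      exact hMs 0
    · rw [convList_peel hj Ms]
      exact conv_contDiffOn (hMs 0) (IH hj _ (fun i => hMs i.succ))

/-! ### The regrouping lemma and the core induction -/

lemma map_sum_le {α β : Type*} {S : Finset α} {G : Finset β} [DecidableEq β]
    {φ : α → β} {f : α → ℝ} {g : β → ℝ}
    (hinj : Set.InjOn φ S) (himg : ∀ x ∈ S, φ x ∈ G)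
    (hle : ∀ x ∈ S, f x ≤ g (φ x)) (hg : ∀ y ∈ G, 0 ≤ g y) :
    ∑ x ∈ S, f x ≤ ∑ y ∈ G, g y := by
  calc ∑ x ∈ S, f x ≤ ∑ x ∈ S, g (φ x) := Finset.sum_le_sum hle
    _ = ∑ y ∈ S.image φ, g y := (Finset.sum_image (fun a ha b hb h => hinj ha hb h)).symm
    _ ≤ ∑ y ∈ G, g y := Finset.sum_le_sum_of_subset_of_nonneg
        (Finset.image_subset_iff.2 himg) (fun y hy _ => hg y hy)

lemma cons_mem_box {j k' a kk : ℕ} (hkk : kk ≤ k') {c' : Fin j → ℕ} (hc' : c' ∈ box j kk)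
    (ha : a ≤ pat (j+1) (k'+1) 0) : Fin.cons a c' ∈ box (j+1) (k'+1) := by
  apply Fintype.mem_piFinset.2
  intro l
  refine Fin.cases ?_ ?_ l
  · rw [Fin.cons_zero]
    exact Finset.mem_range.2 (by omega)
  · intro m
    have h1 := Finset.mem_range.1 (Fintype.mem_piFinset.1 hc' m)
    have h2 := pat_mono (j := j) hkk m
    apply Finset.mem_range.2
    rw [Fin.cons_succ, pat_tail]
    omega

lemma prod_Su_cons {j : ℕ} (Ms : Fin (j+1) → ℝ → ℝ) (a : ℕ) (c' : Fin j → ℕ) (t : ℝ) :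
    (∏ l, Su (Ms l) ((Fin.cons a c' : Fin (j+1) → ℕ) l) t)
      = Su (Ms 0) a t * ∏ m, Su (Ms m.succ) (c' m) t := by
  rw [Fin.prod_univ_succ]
  simp [Fin.cons_zero, Fin.cons_succ]

set_option maxHeartbeats 2000000 in
lemma regroup (j k' : ℕ) (hj : 1 ≤ j) {t : ℝ} (ht : 0 ≤ t) (Ms : Fin (j+1) → ℝ → ℝ)
    (hMs : ∀ i, ContDiffOn ℝ (⊤:ℕ∞) (Ms i) (Ici 0)) :
    Su (Ms 0) 0 t * Mono' j k' t t (fun m => Ms m.succ)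
    + (∑ i ∈ Finset.range k', Mono' j i 0 t (fun m => Ms m.succ) * Su (Ms 0) (k'-i) t)
    + Su (Ms 0) 1 t * (∑ c ∈ box j k', coef j k' t (fun m => Ms m.succ) c
        * (t ^ (eexp j k' c + 1) / (eexp j k' c + 1)))
    ≤ Mono' (j+1) (k'+1) t t Ms := by
  classical
  set Ms' : Fin j → ℝ → ℝ := fun m => Ms m.succ with hMs'def
  have hMs' : ∀ i, ContDiffOn ℝ (⊤:ℕ∞) (Ms' i) (Ici 0) := fun i => hMs i.succ
  set g : (Fin (j+1) → ℕ) → ℝ :=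
    fun c => coef (j+1) (k'+1) t Ms c * t ^ (eexp (j+1) (k'+1) c) with hgdef
  set big := box (j+1) (k'+1) with hbigdef
  set G1 := big.filter (fun c => c 0 = 0) with hG1
  set G2 := big.filter (fun c => c 0 = 1 ∧ k'+2 ≤ (∑ l, c l) + j) with hG2
  set G3 := big.filter (fun c => 1 ≤ c 0 ∧ (∑ l, c l) + j = k'+1) with hG3
  have hgnonneg : ∀ c, 0 ≤ g c :=
    fun c => mul_nonneg (coef_nonneg ht hMs c) (by positivity)
  -- term value at a cons
  have g_cons_val : ∀ (a : ℕ) (c' : Fin j → ℕ),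
      (k'+1 ≤ (a + ∑ m, c' m) + j ∧ (a + ∑ m, c' m) ≤ k'+1) →
      g (Fin.cons a c')
        = (Su (Ms 0) a t * ∏ m, Su (Ms' m) (c' m) t)
          / (Nat.factorial ((a + ∑ m, c' m) + j - (k'+1)))
          * t ^ ((a + ∑ m, c' m) + j - (k'+1)) := by
    intro a c' hec
    have hsum : (∑ l, (Fin.cons a c' : Fin (j+1) → ℕ) l) = a + ∑ m, c' m :=
      Fin.sum_cons a c'
    rw [hgdef]
    unfold coef eexp econd
    simp only [hsum, prod_Su_cons, Nat.add_sub_cancel]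
    rw [if_pos (by omega)]
  have cons_inj : ∀ (a : ℕ), Set.InjOn (fun c' => (Fin.cons a c' : Fin (j+1) → ℕ)) ↑(box j k') := by
    intro a x _ y _ h
    have := congrArg Fin.tail h
    simpa [Fin.tail_cons] using this
  -- Group 1
  have hA : Su (Ms 0) 0 t * Mono' j k' t t Ms' ≤ ∑ c ∈ G1, g c := by
    unfold Mono'
    rw [Finset.mul_sum]
    apply map_sum_le (φ := fun c' => (Fin.cons 0 c' : Fin (j+1) → ℕ)) (cons_inj 0)
    · intro c' hc'
      exact Finset.mem_filter.2 ⟨cons_mem_box (le_refl k') hc' (Nat.zero_le _), rfl⟩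
    · intro c' hc'
      by_cases hec : econd j k' c'
      · apply le_of_eq
        obtain ⟨he1, he2⟩ := hec
        rw [g_cons_val 0 c' (by omega)]
        unfold coef eexp
        rw [if_pos ⟨he1, he2⟩]
        rw [show (0 + ∑ m, c' m) + j - (k'+1) = (∑ m, c' m) + (j-1) - k' by omega]
        ring
      · rw [coef, if_neg hec]
        simpa using hgnonneg (Fin.cons 0 c')
    · intro y _; exact hgnonneg y
  -- Group 3 (boundary terms)
  have hB : (∑ i ∈ Finset.range k', Mono' j i 0 t Ms' * Su (Ms 0) (k'-i) t)
      ≤ ∑ c ∈ G3, g c := by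
    have hrw : (∑ i ∈ Finset.range k', Mono' j i 0 t Ms' * Su (Ms 0) (k'-i) t)
        = ∑ x ∈ (Finset.range k').sigma (fun i => box j i),
            (coef j x.1 t Ms' x.2 * (0:ℝ) ^ (eexp j x.1 x.2)) * Su (Ms 0) (k'-x.1) t := by
      rw [Finset.sum_sigma]
      apply Finset.sum_congr rfl
      intro i _
      rw [Mono', Finset.sum_mul]
    rw [hrw]
    set S0 := (Finset.range k').sigma (fun i => box j i) with hS0
    set p : (Σ _ : ℕ, (Fin j → ℕ)) → Prop :=
      fun x => econd j x.1 x.2 ∧ eexp j x.1 x.2 = 0 with hp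
    have hfil : ∑ x ∈ S0.filter p,
          (coef j x.1 t Ms' x.2 * (0:ℝ) ^ (eexp j x.1 x.2)) * Su (Ms 0) (k'-x.1) t
        = ∑ x ∈ S0, (coef j x.1 t Ms' x.2 * (0:ℝ) ^ (eexp j x.1 x.2)) * Su (Ms 0) (k'-x.1) t := by
      apply Finset.sum_filter_of_ne
      intro x _ hne
      constructor
      · by_contra hc
        rw [coef, if_neg hc] at hne
        simp at hne
      · by_contra hc
        rw [zero_pow hc] at hne
        simp at hne
    rw [← hfil]
    apply map_sum_le (φ := fun x => (Fin.cons (k' - x.1) x.2 : Fin (j+1) → ℕ))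
    · rintro ⟨x1, x2⟩ hx ⟨y1, y2⟩ hy h
      obtain ⟨hx1, hx2⟩ := Finset.mem_filter.1 hx
      obtain ⟨hy1, hy2⟩ := Finset.mem_filter.1 hy
      have hxr := (Finset.mem_sigma.1 hx1).1
      have hyr := (Finset.mem_sigma.1 hy1).1
      rw [Finset.mem_range] at hxr hyr
      have hhead := congrFun h 0
      simp only [Fin.cons_zero] at hhead
      dsimp only at hhead hxr hyr
      have h1 : x1 = y1 := by omega
      subst h1
      have htail := congrArg Fin.tail h
      simp only [Fin.tail_cons] at htail
      simp only [htail]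
    · intro x hx
      obtain ⟨hx1, hx2⟩ := Finset.mem_filter.1 hx
      have hxr := Finset.mem_range.1 (Finset.mem_sigma.1 hx1).1
      have hxb := (Finset.mem_sigma.1 hx1).2
      obtain ⟨⟨hec1, hec2⟩, he0⟩ := hx2
      have hsum0 : (∑ m, x.2 m) + (j-1) = x.1 := by
        unfold eexp at he0
        omega
      apply Finset.mem_filter.2
      refine ⟨cons_mem_box (le_of_lt hxr) hxb ?_, ?_, ?_⟩
      · rw [pat_head]; omega
      · simp only [Fin.cons_zero]; omega
      · rw [Fin.sum_cons]; omega
    · intro x hx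
      obtain ⟨hx1, hx2⟩ := Finset.mem_filter.1 hx
      have hxr := Finset.mem_range.1 (Finset.mem_sigma.1 hx1).1
      obtain ⟨⟨hec1, hec2⟩, he0⟩ := hx2
      have hsum0 : (∑ m, x.2 m) + (j-1) = x.1 := by
        unfold eexp at he0
        omega
      apply le_of_eq
      rw [g_cons_val (k' - x.1) x.2 (by omega)]
      rw [show (k' - x.1 + ∑ m, x.2 m) + j - (k'+1) = 0 by omega]
      rw [coef, if_pos ⟨hec1, hec2⟩, he0]
      simp [Nat.factorial_zero]
      ring
    · intro y _; exact hgnonneg y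
  -- Group 2 (convolution term)
  have hC : Su (Ms 0) 1 t * (∑ c ∈ box j k', coef j k' t Ms' c
        * (t ^ (eexp j k' c + 1) / (eexp j k' c + 1)))
      ≤ ∑ c ∈ G2, g c := by
    rw [Finset.mul_sum]
    have hfil : ∑ c' ∈ (box j k').filter (econd j k'),
          Su (Ms 0) 1 t * (coef j k' t Ms' c' * (t ^ (eexp j k' c' + 1) / (eexp j k' c' + 1)))
        = ∑ c' ∈ box j k',
          Su (Ms 0) 1 t * (coef j k' t Ms' c' * (t ^ (eexp j k' c' + 1) / (eexp j k' c' + 1))) := by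
      apply Finset.sum_filter_of_ne
      intro c' _ hne
      by_contra hc
      rw [coef, if_neg hc] at hne
      simp at hne
    rw [← hfil]
    apply map_sum_le (φ := fun c' => (Fin.cons 1 c' : Fin (j+1) → ℕ))
    · exact fun x hx y hy h => cons_inj 1 (Finset.mem_filter.1 hx).1 (Finset.mem_filter.1 hy).1 h
    · intro c' hc'
      obtain ⟨hbox, hec1, hec2⟩ := Finset.mem_filter.1 hc'
      apply Finset.mem_filter.2
      refine ⟨cons_mem_box (le_refl k') hbox ?_, rfl, ?_⟩
      · rw [pat_head]; omega
      · rw [Fin.sum_cons]; omega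
    · intro c' hc'
      obtain ⟨hbox, hec1, hec2⟩ := Finset.mem_filter.1 hc'
      apply le_of_eq
      rw [g_cons_val 1 c' (by omega)]
      rw [coef, if_pos ⟨hec1, hec2⟩]
      rw [show (1 + ∑ m, c' m) + j - (k'+1) = ((∑ m, c' m) + (j-1) - k') + 1 by omega]
      rw [Nat.factorial_succ]
      unfold eexp
      push_cast
      have h1 : ((((∑ m, c' m) + (j-1) - k') : ℕ) : ℝ) + 1 ≠ 0 := by positivity
      have h2 : (((((∑ m, c' m) + (j-1) - k') : ℕ).factorial : ℕ) : ℝ) ≠ 0 := by positivity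
      field_simp
    · intro y _; exact hgnonneg y
  -- partition
  have hd23 : Disjoint G2 G3 := by
    rw [Finset.disjoint_left]
    intro c h2 h3
    have := (Finset.mem_filter.1 h2).2
    have := (Finset.mem_filter.1 h3).2
    omega
  have hd1 : Disjoint G1 (G2 ∪ G3) := by
    rw [Finset.disjoint_left]
    intro c h1 h23
    have hc1 := (Finset.mem_filter.1 h1).2
    rcases Finset.mem_union.1 h23 with h | h
    · have := (Finset.mem_filter.1 h).2
      omega
    · have := (Finset.mem_filter.1 h).2
      omega
  have hsub : G1 ∪ (G2 ∪ G3) ⊆ big := by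
    intro c hc
    rcases Finset.mem_union.1 hc with h | h
    · exact (Finset.mem_filter.1 h).1
    · rcases Finset.mem_union.1 h with h' | h'
      · exact (Finset.mem_filter.1 h').1
      · exact (Finset.mem_filter.1 h').1
  have hbig : (∑ c ∈ G1, g c) + ((∑ c ∈ G2, g c) + (∑ c ∈ G3, g c))
      ≤ Mono' (j+1) (k'+1) t t Ms := by
    rw [← Finset.sum_union hd23, ← Finset.sum_union hd1]
    exact Finset.sum_le_sum_of_subset_of_nonneg hsub (fun y _ _ => hgnonneg y)
  linarith

lemma core : ∀ (j : ℕ), 1 ≤ j → ∀ (Ms : Fin j → ℝ → ℝ),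
    (∀ i, ContDiffOn ℝ (⊤:ℕ∞) (Ms i) (Ici 0)) → ∀ (k : ℕ) (t : ℝ), 0 ≤ t →
    |itD k (convList (List.ofFn Ms)) t| ≤ Mono' j k t t Ms := by
  intro j
  induction j with
  | zero => omega
  | succ j IH =>
    intro _ Ms hMs k t ht
    rcases Nat.eq_zero_or_pos j with hj | hj
    · -- base case j+1 = 1
      subst hj
      rw [convList_one]
      have h1 : |itD k (Ms 0) t| ≤ Su (Ms 0) k t := le_Su (hMs 0) k ⟨ht, le_refl t⟩
      refine le_trans h1 ?_
      have hmem : (fun _ : Fin 1 => k) ∈ box 1 k := by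
        apply Fintype.mem_piFinset.2
        intro l
        apply Finset.mem_range.2
        have : k ≤ pat 1 k l := by
          unfold pat
          split_ifs with h <;> simp only [le_min_iff] at * <;> omega
        omega
      have hterm : coef 1 k t Ms (fun _ => k) * t ^ (eexp 1 k (fun _ => k))
          = Su (Ms 0) k t := by
        have hs : (∑ l : Fin 1, (fun _ : Fin 1 => k) l) = k := by simp
        unfold coef eexp econd
        simp only [hs]
        rw [if_pos (by omega)]
        simp [Nat.sub_self]
      have hsum := Finset.single_le_sum (f := fun c => coef 1 k t Ms c * t ^ (eexp 1 k c))
        (fun c _ => mul_nonneg (coef_nonneg ht hMs c) (by positivity)) hmem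
      exact le_trans (le_of_eq hterm.symm) hsum
    · -- inductive step
      set Ms' : Fin j → ℝ → ℝ := fun m => Ms m.succ with hMs'def
      have hMs' : ∀ i, ContDiffOn ℝ (⊤:ℕ∞) (Ms' i) (Ici 0) := fun i => hMs i.succ
      set F₂ : ℝ → ℝ := convList (List.ofFn Ms') with hF₂def
      have hF₂ : ContDiffOn ℝ (⊤:ℕ∞) F₂ (Ici 0) := convList_contDiffOn j hj Ms' hMs'
      have hpeel : convList (List.ofFn Ms) = conv (Ms 0) F₂ := convList_peel hj Ms
      rw [hpeel]
      rcases k with _ | k'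
      · -- k = 0
        have h0 : itD 0 (conv (Ms 0) F₂) t = conv (Ms 0) F₂ t := by
          rw [itD, iteratedDerivWithin_zero]
        rw [h0]
        have hbound : |conv (Ms 0) F₂ t| ≤ Su (Ms 0) 0 t
            * ∫ s in (0:ℝ)..t, Mono' j 0 s t Ms' := by
          apply conv_abs_le (hMs 0).continuousOn hF₂.continuousOn ht
          · intro x hx
            have := le_Su (hMs 0) 0 (t := t) hx
            rwa [itD, iteratedDerivWithin_zero] at this
          · exact (Mono'_continuous Ms').continuousOn
          · intro s hs
            have h1 := IH hj Ms' hMs' 0 s hs.1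
            rw [itD, iteratedDerivWithin_zero] at h1
            exact le_trans h1 (Mono'_mono hs.1 (le_refl s) hs.1 hs.2 hMs')
        refine le_trans hbound ?_
        have hint : (∫ s in (0:ℝ)..t, Mono' j 0 s t Ms')
            = ((∏ l, Su (Ms' l) 0 t) / (Nat.factorial (j-1))) * (t ^ j / j) := by
          have hfun : (fun s => Mono' j 0 s t Ms')
              = fun s => ((∏ l, Su (Ms' l) 0 t) / (Nat.factorial (j-1))) * s ^ (j-1) :=
            funext (fun s => by rw [mono'_zero hj]; ring)
          rw [hfun, intervalIntegral.integral_const_mul, integral_pow]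
          rw [Nat.sub_add_cancel hj, zero_pow (by omega)]
          rw [show ((j-1:ℕ):ℝ) + 1 = (j:ℝ) by rw [Nat.cast_sub hj]; push_cast; ring]
          ring
        rw [hint, mono'_zero (by omega : 1 ≤ j+1)]
        rw [Fin.prod_univ_succ]
        have hfac : ((j+1-1).factorial : ℝ) = j * ((j-1).factorial : ℝ) := by
          rw [Nat.add_sub_cancel]
          rw [← Nat.mul_factorial_pred (by omega)]
          push_cast
          ring
        rw [hfac, Nat.add_sub_cancel]
        have hjne : (j:ℝ) ≠ 0 := by positivity
        have hfne : ((j-1).factorial : ℝ) ≠ 0 := by positivity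
        field_simp
        ring_nf
        exact le_of_eq (by ring)
      · -- k = k'+1
        have hid := main_identity (hMs 0) hF₂ k' ht
        rw [hid]
        have hT1 : |Ms 0 0 * itD k' F₂ t| ≤ Su (Ms 0) 0 t * Mono' j k' t t Ms' := by
          rw [abs_mul]
          apply mul_le_mul ?_ (IH hj Ms' hMs' k' t ht) (abs_nonneg _)
            (Su_nonneg (hMs 0) 0 ht)
          have := le_Su (hMs 0) 0 (t := t) ⟨le_refl 0, ht⟩
          rwa [itD, iteratedDerivWithin_zero] at this
        have hT2 : |∑ i ∈ Finset.range k', itD i F₂ 0 * itD (k'-i) (Ms 0) t|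
            ≤ ∑ i ∈ Finset.range k', Mono' j i 0 t Ms' * Su (Ms 0) (k'-i) t := by
          refine le_trans (Finset.abs_sum_le_sum_abs _ _) ?_
          apply Finset.sum_le_sum
          intro i _
          rw [abs_mul]
          apply mul_le_mul ?_ (le_Su (hMs 0) _ ⟨ht, le_refl t⟩) (abs_nonneg _)
          · exact le_trans (Mono'_nonneg (le_refl 0) (le_refl 0) hMs')
              (Mono'_mono (le_refl 0) (le_refl 0) (le_refl 0) ht hMs')
          · exact le_trans (IH hj Ms' hMs' i 0 (le_refl 0))
              (Mono'_mono (le_refl 0) (le_refl 0) (le_refl 0) ht hMs')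
        have hT3 : |conv (dW (Ms 0)) (itD k' F₂) t|
            ≤ Su (Ms 0) 1 t * (∑ c ∈ box j k', coef j k' t Ms' c
              * (t ^ (eexp j k' c + 1) / (eexp j k' c + 1))) := by
          rw [← Mono'_integral]
          apply conv_abs_le (dW_contDiffOn (hMs 0)).continuousOn
            (itD_contDiffOn hF₂ k').continuousOn ht
          · intro x hx
            have h1 := le_Su (hMs 0) 1 (t := t) hx
            have h2 : itD 1 (Ms 0) x = dW (Ms 0) x :=
              congrFun iteratedDerivWithin_one x
            rwa [h2] at h1
          · exact (Mono'_continuous Ms').continuousOn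
          · intro s hs
            exact le_trans (IH hj Ms' hMs' k' s hs.1)
              (Mono'_mono hs.1 (le_refl s) hs.1 hs.2 hMs')
        calc |Ms 0 0 * itD k' F₂ t + (∑ i ∈ Finset.range k', itD i F₂ 0 * itD (k'-i) (Ms 0) t)
              + conv (dW (Ms 0)) (itD k' F₂) t|
            ≤ |Ms 0 0 * itD k' F₂ t + (∑ i ∈ Finset.range k', itD i F₂ 0 * itD (k'-i) (Ms 0) t)|
              + |conv (dW (Ms 0)) (itD k' F₂) t| := abs_add_le _ _
          _ ≤ |Ms 0 0 * itD k' F₂ t| + |∑ i ∈ Finset.range k', itD i F₂ 0 * itD (k'-i) (Ms 0) t|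
              + |conv (dW (Ms 0)) (itD k' F₂) t| := by
                have := abs_add_le (Ms 0 0 * itD k' F₂ t)
                  (∑ i ∈ Finset.range k', itD i F₂ 0 * itD (k'-i) (Ms 0) t)
                linarith
          _ ≤ Su (Ms 0) 0 t * Mono' j k' t t Ms'
              + (∑ i ∈ Finset.range k', Mono' j i 0 t Ms' * Su (Ms 0) (k'-i) t)
              + Su (Ms 0) 1 t * (∑ c ∈ box j k', coef j k' t Ms' c
                * (t ^ (eexp j k' c + 1) / (eexp j k' c + 1))) := by
                linarith
          _ ≤ Mono' (j+1) (k'+1) t t Ms := regroup j k' hj ht Ms hMs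

lemma CkNorm_eq_sum_Su (a : ℕ) (t : ℝ) (f : ℝ → ℝ) :
    CkNorm a t f = ∑ l ∈ Finset.range (a+1), Su f l t := rfl

lemma final_ineq {j k : ℕ} {t : ℝ} (ht : 0 ≤ t) (Ms : Fin j → ℝ → ℝ)
    (hMs : ∀ i, ContDiffOn ℝ (⊤:ℕ∞) (Ms i) (Ici 0)) :
    Mono' j k t t Ms ≤ (∑ l ∈ Finset.Icc (j-1-k) (j-1), t ^ l / (l.factorial : ℝ))
      * ∏ i, CkNorm (pat j k i) t (Ms i) := by
  have hprod : (∏ i, CkNorm (pat j k i) t (Ms i))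
      = ∑ c ∈ box j k, ∏ i, Su (Ms i) (c i) t := by
    simp_rw [CkNorm_eq_sum_Su]
    exact Finset.prod_univ_sum _ _
  rw [hprod, Finset.mul_sum]
  unfold Mono'
  apply Finset.sum_le_sum
  intro c hc
  have hP : 0 ≤ ∏ i, Su (Ms i) (c i) t :=
    Finset.prod_nonneg (fun i _ => Su_nonneg (hMs i) _ ht)
  rw [Finset.sum_mul]
  by_cases hec : econd j k c
  · have hmem : eexp j k c ∈ Finset.Icc (j-1-k) (j-1) := by
      obtain ⟨h1, h2⟩ := hec
      unfold eexp
      rw [Finset.mem_Icc]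
      omega
    have hterm : coef j k t Ms c * t ^ (eexp j k c)
        = t ^ (eexp j k c) / ((eexp j k c).factorial : ℝ) * ∏ i, Su (Ms i) (c i) t := by
      rw [coef, if_pos hec]
      ring
    rw [hterm]
    exact Finset.single_le_sum
      (f := fun l => t ^ l / (l.factorial : ℝ) * ∏ i, Su (Ms i) (c i) t)
      (fun l _ => mul_nonneg (by positivity) hP) hmem
  · rw [coef, if_neg hec]
    simp only [zero_mul]
    exact Finset.sum_nonneg (fun l _ => mul_nonneg (by positivity) hP)

end Aux

/-- For `M_1, …, M_j ∈ C^∞([0,∞))` (`j ≥ 1`), `k ≥ 0`, with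
`p = max{k-j+1,1}`, `q = min{k,j}`, `C(j,k,t) = ∑_{l=max{0,j-1-k}}^{j-1} t^l/l!`: for `t > 0`,
`|d^k/dt^k (M_1*⋯*M_j)(t)| ≤ C(j,k,t) · ∏_{l≤q} ‖M_l‖_{C^p([0,t])} · ∏_{l>q} ‖M_l‖_{C^{p-1}([0,t])}`.
(The index `i : Fin j` corresponds to `l = i + 1 ∈ {1, …, j}`.) -/
theorem convList_deriv_bound_refined
    (j k : ℕ) (hj : 1 ≤ j) (Ms : Fin j → ℝ → ℝ)
    (hMs : ∀ i, ContDiffOn ℝ (⊤ : ℕ∞) (Ms i) (Set.Ici 0)) :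
    ∀ t : ℝ, 0 < t →
      |iteratedDerivWithin k (convList (List.ofFn Ms)) (Set.Ici 0) t| ≤
        (∑ l ∈ Finset.Icc (j - 1 - k) (j - 1), t ^ l / (l.factorial : ℝ)) *
          ∏ i : Fin j,
            CkNorm (if (i : ℕ) + 1 ≤ min k j then max (k + 1 - j) 1 else max (k + 1 - j) 1 - 1)
              t (Ms i) := by
  intro t ht
  have h1 := core j hj Ms hMs k t ht.le
  have h2 := final_ineq ht.le Ms hMs (k := k)
  have h3 : (∏ i, CkNorm (pat j k i) t (Ms i))
      = ∏ i : Fin j, CkNorm (if (i : ℕ) + 1 ≤ min k j then max (k + 1 - j) 1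
          else max (k + 1 - j) 1 - 1) t (Ms i) := by
    apply Finset.prod_congr rfl
    intro i _
    rfl
  rw [← h3]
  exact le_trans h1 h2
end

section
/- Let α ≥ 0, β ≥ 1 and j ≥ 1 be integers, let M ∈ C^{α+β}([0,∞), ℝ), and define ℳ_j(t,s) := ((-s)^j / j!) · M^{*j}(t-s) for t ≥ s. Then for all real t > s, |∂_t^α ∂_s^β ℳ_j(t,s)| ≤ (e^{t-s} / j!) · ( β (1+|s|) ‖M‖_{C^{α+β}([0,t-s])} )^j. -/
set_option maxHeartbeats 1000000

open Set MeasureTheory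

namespace CalMAux

/-- Unconditional constant-multiple rule for iterated derivatives over a field. -/
lemma iteratedDeriv_const_mul_fun (n : ℕ) (c : ℝ) (f : ℝ → ℝ) :
    iteratedDeriv n (fun x => c * f x) = fun x => c * iteratedDeriv n f x := by
  induction n with
  | zero => simp [iteratedDeriv_zero]
  | succ n IH =>
    funext x
    rw [iteratedDeriv_succ, IH, iteratedDeriv_succ]
    exact deriv_const_mul_field c

lemma iteratedDeriv_pow_fun (j i : ℕ) :
    iteratedDeriv i (fun x : ℝ => x ^ j) = fun x => (j.descFactorial i : ℝ) * x ^ (j - i) := by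
  induction i with
  | zero => simp
  | succ i IH =>
    funext x
    rw [iteratedDeriv_succ, IH]
    have : deriv (fun x : ℝ => (j.descFactorial i : ℝ) * x ^ (j - i)) x
        = (j.descFactorial i : ℝ) * ((j - i : ℕ) * x ^ (j - i - 1)) := by
      rw [deriv_const_mul_field]
      simp [deriv_pow]
    rw [this, Nat.descFactorial_succ]
    have : j - (i + 1) = j - i - 1 := by omega
    rw [this]
    push_cast
    ring

noncomputable def clamp (X : ℝ) (u : ℝ → ℝ) : ℝ → ℝ := fun x => u (min (max x 0) X)

lemma clamp_mem {X x : ℝ} (hX : 0 ≤ X) : min (max x 0) X ∈ Icc (0:ℝ) X :=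
  ⟨le_min (le_max_right _ _) hX, min_le_right _ _⟩

lemma clamp_continuous {X : ℝ} {u : ℝ → ℝ} (hX : 0 ≤ X) (hu : ContinuousOn u (Icc 0 X)) :
    Continuous (clamp X u) := by
  apply hu.comp_continuous (by fun_prop)
  exact fun x => clamp_mem hX

lemma clamp_eq {X : ℝ} (u : ℝ → ℝ) {x : ℝ} (hx : x ∈ Icc (0:ℝ) X) : clamp X u x = u x := by
  unfold clamp
  rw [max_eq_left hx.1, min_eq_left hx.2]

/-- Continuity of the truncated convolution of globally continuous functions. -/
lemma conv_continuous {u g : ℝ → ℝ} (hu : Continuous u) (hg : Continuous g) :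
    Continuous (conv u g) := by
  have h : Continuous (Function.uncurry fun x t => u (x - t) * g t) := by fun_prop
  exact intervalIntegral.continuous_parametric_intervalIntegral_of_continuous h continuous_id

lemma triangle_swap {u g : ℝ → ℝ} (hu : Continuous u) (hg : Continuous g) {x : ℝ} (hx : 0 ≤ x) :
    ∫ y in (0:ℝ)..x, conv u g y = ∫ v in (0:ℝ)..x, g v * ∫ w in (0:ℝ)..(x - v), u w := by
  set μ := volume.restrict (Ioc (0:ℝ) x) with hμ
  haveI : IsFiniteMeasure μ := by
    constructor
    rw [hμ, Measure.restrict_apply_univ]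
    exact measure_Ioc_lt_top
  set Φ : ℝ → ℝ → ℝ := fun y v => (Ioc (0:ℝ) y).indicator (fun v => u (y - v) * g v) v with hΦ
  -- integrability on the product
  have hψc : Continuous (fun p : ℝ × ℝ => u (p.1 - p.2) * g p.2) := by fun_prop
  have hS : MeasurableSet {p : ℝ × ℝ | 0 < p.2 ∧ p.2 ≤ p.1} :=
    (measurableSet_lt measurable_const measurable_snd).inter
      (measurableSet_le measurable_snd measurable_fst)
  have hunc : Function.uncurry Φ =
      ({p : ℝ × ℝ | 0 < p.2 ∧ p.2 ≤ p.1}).indicator (fun p => u (p.1 - p.2) * g p.2) := by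
    funext p
    by_cases h : p.2 ∈ Ioc (0:ℝ) p.1
    · rw [Function.uncurry, hΦ]
      simp only [indicator_of_mem h]
      have : p ∈ {p : ℝ × ℝ | 0 < p.2 ∧ p.2 ≤ p.1} := ⟨h.1, h.2⟩
      rw [indicator_of_mem this]
    · rw [Function.uncurry, hΦ]
      simp only [indicator_of_notMem h]
      have : p ∉ {p : ℝ × ℝ | 0 < p.2 ∧ p.2 ≤ p.1} := fun hp => h ⟨hp.1, hp.2⟩
      rw [indicator_of_notMem this]
  have hint : Integrable (Function.uncurry Φ) (μ.prod μ) := by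
    rw [hunc]
    obtain ⟨C, hC⟩ := (isCompact_Icc (a := -x) (b := x)).exists_bound_of_continuousOn
      hu.continuousOn
    obtain ⟨D, hD⟩ := (isCompact_Icc (a := (0:ℝ)) (b := x)).exists_bound_of_continuousOn
      hg.continuousOn
    have hCD : ∀ y ∈ Icc (-x) x, ∀ v ∈ Icc (0:ℝ) x, |u y * g v| ≤ C * D := by
      intro y hy v hv
      rw [abs_mul]
      have h1 := hC y hy
      have h2 := hD v hv
      simp only [Real.norm_eq_abs] at h1 h2
      exact mul_le_mul h1 h2 (abs_nonneg _) ((abs_nonneg _).trans h1)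
    refine Integrable.mono' (integrable_const (C * D)) ?_ ?_
    · exact ((hψc.stronglyMeasurable).indicator hS).aestronglyMeasurable
    · rw [hμ, Measure.prod_restrict]
      filter_upwards [ae_restrict_mem (measurableSet_Ioc.prod measurableSet_Ioc)] with p hp
      rw [Real.norm_eq_abs]
      by_cases h : p ∈ {p : ℝ × ℝ | 0 < p.2 ∧ p.2 ≤ p.1}
      · rw [indicator_of_mem h]
        refine hCD _ ⟨?_, ?_⟩ _ ⟨le_of_lt hp.2.1, hp.2.2⟩
        · have := hp.1.1; have := hp.2.2; linarith
        · have := hp.1.2; have := hp.2.1; linarith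
      · rw [indicator_of_notMem h, abs_zero]
        have hC0 : 0 ≤ C := (abs_nonneg _).trans (by simpa using hC 0 ⟨neg_nonpos.mpr hx, hx⟩)
        have hD0 : 0 ≤ D := (abs_nonneg _).trans (by simpa using hD 0 ⟨le_refl _, hx⟩)
        positivity
  -- rewrite LHS
  have step1 : ∫ y in (0:ℝ)..x, conv u g y = ∫ y, (∫ v, Φ y v ∂μ) ∂μ := by
    rw [intervalIntegral.integral_of_le hx]
    refine setIntegral_congr_fun measurableSet_Ioc (fun y hy => ?_)
    rw [conv, intervalIntegral.integral_of_le hy.1.le, hμ]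
    rw [setIntegral_indicator measurableSet_Ioc]
    congr 1
    rw [Set.inter_eq_self_of_subset_right (Ioc_subset_Ioc_right hy.2)]
  rw [step1, integral_integral_swap hint]
  -- inner integral computation
  rw [intervalIntegral.integral_of_le hx]
  refine setIntegral_congr_fun measurableSet_Ioc (fun v hv => ?_)
  have hΦv : ∀ y, Φ y v = (Ici v).indicator (fun y => u (y - v) * g v) y := by
    intro y
    show (Ioc (0:ℝ) y).indicator (fun v => u (y - v) * g v) v = _
    by_cases h : v ≤ y
    · rw [indicator_of_mem (mem_Ioc.mpr ⟨hv.1, h⟩), indicator_of_mem (mem_Ici.mpr h)]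
    · have h1 : v ∉ Ioc (0:ℝ) y := fun hm => h hm.2
      have h2 : y ∉ Ici v := fun hm => h hm
      rw [indicator_of_notMem h1, indicator_of_notMem h2]
  calc ∫ y, Φ y v ∂μ = ∫ y in Ioc (0:ℝ) x, (Ici v).indicator (fun y => u (y - v) * g v) y := by
        rw [hμ]; exact setIntegral_congr_fun measurableSet_Ioc (fun y _ => hΦv y)
    _ = ∫ y in Ioc (0:ℝ) x ∩ Ici v, u (y - v) * g v := by
        rw [setIntegral_indicator measurableSet_Ici]
    _ = ∫ y in Icc v x, u (y - v) * g v := by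
        have hset : Ioc (0:ℝ) x ∩ Ici v = Icc v x := by
          ext y
          simp only [mem_inter_iff, mem_Ioc, mem_Ici, mem_Icc]
          constructor
          · rintro ⟨⟨_, h2⟩, h3⟩; exact ⟨h3, h2⟩
          · rintro ⟨h1, h2⟩; exact ⟨⟨lt_of_lt_of_le hv.1 h1, h2⟩, h1⟩
        rw [hset]
    _ = ∫ y in Ioc v x, u (y - v) * g v := integral_Icc_eq_integral_Ioc
    _ = (∫ y in v..x, u (y - v)) * g v := by
        rw [intervalIntegral.integral_of_le hv.2, ← integral_mul_const]
    _ = (∫ w in (0:ℝ)..(x - v), u w) * g v := by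
        rw [intervalIntegral.integral_comp_sub_right (fun w => u w) v, sub_self]
    _ = g v * ∫ w in (0:ℝ)..(x - v), u w := mul_comm _ _

/-- The fundamental identity: convolution with a primitive. Global continuous version. -/
lemma conv_primitive {u g : ℝ → ℝ} (hu : Continuous u) (hg : Continuous g) (c : ℝ)
    {x : ℝ} (hx : 0 ≤ x) :
    conv (fun w => c + ∫ r in (0:ℝ)..w, u r) g x
      = c * (∫ v in (0:ℝ)..x, g v) + ∫ y in (0:ℝ)..x, conv u g y := by
  rw [triangle_swap hu hg hx]
  show ∫ v in (0:ℝ)..x, (c + ∫ r in (0:ℝ)..(x - v), u r) * g v = _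
  have hprim : Continuous (fun v : ℝ => ∫ r in (0:ℝ)..(x - v), u r) := by
    have h : Continuous (Function.uncurry fun (_ : ℝ) (t : ℝ) => u t) := by fun_prop
    exact intervalIntegral.continuous_parametric_intervalIntegral_of_continuous h
      (continuous_const.sub continuous_id)
  have heq : (fun v => (c + ∫ r in (0:ℝ)..(x - v), u r) * g v)
      = fun v => c * g v + (∫ r in (0:ℝ)..(x - v), u r) * g v := by
    funext v; ring
  rw [heq, intervalIntegral.integral_add (f := fun v => c * g v)
      (g := fun v => (∫ r in (0:ℝ)..(x - v), u r) * g v)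
      ((continuous_const.mul hg).intervalIntegrable _ _)
      ((hprim.mul hg).intervalIntegrable _ _),
    intervalIntegral.integral_const_mul]
  congr 1
  refine intervalIntegral.integral_congr (fun v _ => ?_)
  exact mul_comm _ _

/-- Congruence for `conv` with functions agreeing on `[0, X]`. -/
lemma conv_congr {X : ℝ} {u u' g g' : ℝ → ℝ} (hu : EqOn u u' (Icc 0 X)) (hg : EqOn g g' (Icc 0 X))
    {x : ℝ} (hx : x ∈ Icc (0:ℝ) X) : conv u g x = conv u' g' x := by
  refine intervalIntegral.integral_congr (fun v hv => ?_)
  rw [uIcc_of_le hx.1] at hv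
  have hv' : v ∈ Icc (0:ℝ) X := ⟨hv.1, hv.2.trans hx.2⟩
  have hxv : x - v ∈ Icc (0:ℝ) X := ⟨by linarith [hv.2], by linarith [hv.1, hx.2]⟩
  rw [hu hxv, hg hv']

lemma conv_continuousOn {X : ℝ} (hX : 0 ≤ X) {u g : ℝ → ℝ}
    (hu : ContinuousOn u (Icc 0 X)) (hg : ContinuousOn g (Icc 0 X)) :
    ContinuousOn (conv u g) (Icc 0 X) := by
  refine ((conv_continuous (clamp_continuous hX hu) (clamp_continuous hX hg)).continuousOn).congr
    (fun x hx => ?_)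
  exact conv_congr (fun w hw => (clamp_eq u hw).symm) (fun w hw => (clamp_eq g hw).symm) hx

lemma conv_primitive_on {X : ℝ} {u g f : ℝ → ℝ}
    (hu : ContinuousOn u (Icc 0 X)) (hg : ContinuousOn g (Icc 0 X)) (c : ℝ)
    (hf : ∀ w ∈ Icc (0:ℝ) X, f w = c + ∫ r in (0:ℝ)..w, u r)
    {x : ℝ} (hx : x ∈ Icc (0:ℝ) X) :
    conv f g x = c * (∫ v in (0:ℝ)..x, g v) + ∫ y in (0:ℝ)..x, conv u g y := by
  have hX : (0:ℝ) ≤ X := hx.1.trans hx.2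
  set u' := clamp X u with hu'
  set g' := clamp X g with hg'
  have hu'c : Continuous u' := clamp_continuous hX hu
  have hg'c : Continuous g' := clamp_continuous hX hg
  have hfeq : EqOn f (fun w => c + ∫ r in (0:ℝ)..w, u' r) (Icc 0 X) := by
    intro w hw
    rw [hf w hw]
    congr 1
    refine intervalIntegral.integral_congr (fun r hr => ?_)
    rw [uIcc_of_le hw.1] at hr
    exact (clamp_eq u ⟨hr.1, hr.2.trans hw.2⟩).symm
  have h1 : conv f g x = conv (fun w => c + ∫ r in (0:ℝ)..w, u' r) g' x :=
    conv_congr hfeq (fun w hw => (clamp_eq g hw).symm) hx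
  rw [h1, conv_primitive hu'c hg'c c hx.1]
  congr 1
  · congr 1
    refine intervalIntegral.integral_congr (fun v hv => ?_)
    rw [uIcc_of_le hx.1] at hv
    exact clamp_eq g ⟨hv.1, hv.2.trans hx.2⟩
  · refine intervalIntegral.integral_congr (fun y hy => ?_)
    rw [uIcc_of_le hx.1] at hy
    exact (conv_congr (fun w hw => (clamp_eq u hw).symm) (fun w hw => (clamp_eq g hw).symm)
      ⟨hy.1, hy.2.trans hx.2⟩).symm

/-- A sequence of continuous functions on `[0,X]`, each the primitive of the next. -/
structure DSeq (X : ℝ) (K : ℕ) (F : ℕ → ℝ → ℝ) : Prop where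
  cont : ∀ l ≤ K, ContinuousOn (F l) (Icc 0 X)
  step : ∀ l < K, ∀ x ∈ Icc (0:ℝ) X, F l x = F l 0 + ∫ y in (0:ℝ)..x, F (l+1) y

namespace DSeq

lemma intervalIntegrable {X : ℝ} {K : ℕ} {F : ℕ → ℝ → ℝ} (h : DSeq X K F) {l : ℕ} (hl : l ≤ K)
    {x : ℝ} (hx : x ∈ Icc (0:ℝ) X) : IntervalIntegrable (F l) volume 0 x := by
  refine ((h.cont l hl).mono ?_).intervalIntegrable
  rw [uIcc_of_le hx.1]
  exact Icc_subset_Icc le_rfl hx.2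

lemma hasDerivAt {X : ℝ} {K : ℕ} {F : ℕ → ℝ → ℝ} (h : DSeq X K F) {l : ℕ} (hl : l < K)
    {x : ℝ} (hx : x ∈ Ioo (0:ℝ) X) : HasDerivAt (F l) (F (l+1) x) x := by
  have hIcc : Icc (0:ℝ) X ∈ nhds x := Icc_mem_nhds hx.1 hx.2
  have h1 : HasDerivAt (fun w => ∫ y in (0:ℝ)..w, F (l+1) y) (F (l+1) x) x := by
    refine intervalIntegral.integral_hasDerivAt_right
      (h.intervalIntegrable (Nat.succ_le_of_lt hl) (Ioo_subset_Icc_self hx)) ?_ ?_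
    · exact (ContinuousOn.stronglyMeasurableAtFilter isOpen_Ioo
        (((h.cont (l+1) hl).mono Ioo_subset_Icc_self)) x hx)
    · exact ((h.cont (l+1) hl).continuousAt hIcc)
  have h2 : HasDerivAt (fun w => F l 0 + ∫ y in (0:ℝ)..w, F (l+1) y) (F (l+1) x) x :=
    h1.const_add _
  refine h2.congr_of_eventuallyEq ?_
  filter_upwards [Ioo_mem_nhds hx.1 hx.2] with w hw
  exact h.step l hl w (Ioo_subset_Icc_self hw)

lemma iteratedDeriv_eq {X : ℝ} {K : ℕ} {F : ℕ → ℝ → ℝ} (h : DSeq X K F) {k : ℕ} (hk : k ≤ K)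
    {x : ℝ} (hx : x ∈ Ioo (0:ℝ) X) : iteratedDeriv k (F 0) x = F k x := by
  induction k generalizing x with
  | zero => simp
  | succ k IH =>
    rw [iteratedDeriv_succ]
    have hev : iteratedDeriv k (F 0) =ᶠ[nhds x] F k := by
      filter_upwards [Ioo_mem_nhds hx.1 hx.2] with w hw
      exact IH (le_of_lt (Nat.lt_of_succ_le hk)) hw
    rw [hev.deriv_eq]
    exact (h.hasDerivAt (Nat.lt_of_succ_le hk) hx).deriv

lemma contDiffOn_shift {X : ℝ} {K : ℕ} {F : ℕ → ℝ → ℝ} (h : DSeq X K F) {a m : ℕ}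
    (ham : a + m ≤ K) : ContDiffOn ℝ m (F a) (Ioo 0 X) := by
  induction m generalizing a with
  | zero =>
    exact contDiffOn_zero.mpr ((h.cont a (by omega)).mono Ioo_subset_Icc_self)
  | succ m IH =>
    have hcast : ((m + 1 : ℕ) : WithTop ℕ∞) = (m : WithTop ℕ∞) + 1 := by norm_cast
    rw [hcast, contDiffOn_succ_iff_deriv_of_isOpen isOpen_Ioo]
    refine ⟨fun x hx => (h.hasDerivAt (l := a) (show a < K by omega) hx).differentiableAt.differentiableWithinAt,
      ?_, ?_⟩
    · intro hω
      exact absurd hω (by simp)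
    · refine (IH (a := a + 1) (by omega)).congr (fun x hx => ?_)
      exact (h.hasDerivAt (l := a) (show a < K by omega) hx).deriv

end DSeq

/-- The derivative sequence of a convolution `conv (Fm 0) (F 0)`. -/
lemma DSeq.conv_step {X : ℝ} (hX : 0 ≤ X) {K : ℕ} {Fm F : ℕ → ℝ → ℝ}
    (hFm : DSeq X K Fm) (hF : DSeq X K F) :
    DSeq X K (fun l x => (∑ i ∈ Finset.range l, Fm i 0 * F (l-1-i) x) + conv (Fm l) (F 0) x) := by
  have hconvc : ∀ l ≤ K, ContinuousOn (conv (Fm l) (F 0)) (Icc 0 X) := fun l hl =>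
    conv_continuousOn hX (hFm.cont l hl) (hF.cont 0 (Nat.zero_le K))
  constructor
  · intro l hl
    refine ContinuousOn.add ?_ (hconvc l hl)
    refine continuousOn_finset_sum _ (fun i hi => ?_)
    exact continuousOn_const.mul (hF.cont (l-1-i) (by omega))
  · intro l hl x hx
    have hcpr : conv (Fm l) (F 0) x
        = Fm l 0 * (∫ v in (0:ℝ)..x, F 0 v) + ∫ y in (0:ℝ)..x, conv (Fm (l+1)) (F 0) y :=
      conv_primitive_on (hFm.cont (l+1) hl) (hF.cont 0 (Nat.zero_le K)) (Fm l 0)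
        (hFm.step l hl) hx
    have hFstep : ∀ i < l, F (l-1-i) x = F (l-1-i) 0 + ∫ y in (0:ℝ)..x, F (l-i) y := by
      intro i hi
      have h1 : l - 1 - i < K := by omega
      have h2 : l - 1 - i + 1 = l - i := by omega
      rw [← h2]
      exact hF.step (l-1-i) h1 x hx
    -- integrability facts
    have hFint : ∀ m ≤ K, IntervalIntegrable (F m) volume 0 x := by
      intro m hm
      refine ((hF.cont m hm).mono ?_).intervalIntegrable
      rw [uIcc_of_le hx.1]; exact Icc_subset_Icc le_rfl hx.2
    have hconvint : IntervalIntegrable (conv (Fm (l+1)) (F 0)) volume 0 x := by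
      refine ((hconvc (l+1) hl).mono ?_).intervalIntegrable
      rw [uIcc_of_le hx.1]; exact Icc_subset_Icc le_rfl hx.2
    -- compute the integral of the (l+1)-st term
    have hsplit : ∫ y in (0:ℝ)..x,
          ((∑ i ∈ Finset.range (l+1), Fm i 0 * F (l-i) y) + conv (Fm (l+1)) (F 0) y)
        = (∑ i ∈ Finset.range (l+1), Fm i 0 * ∫ y in (0:ℝ)..x, F (l-i) y)
          + ∫ y in (0:ℝ)..x, conv (Fm (l+1)) (F 0) y := by
      have hsumint : IntervalIntegrable
          (fun y => ∑ i ∈ Finset.range (l+1), Fm i 0 * F (l-i) y) volume 0 x := by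
        have h := IntervalIntegrable.sum (μ := volume) (a := (0:ℝ)) (b := x)
          (Finset.range (l+1)) (f := fun i y => Fm i 0 * F (l-i) y)
          (fun i _ => (hFint (l-i) (by omega)).const_mul _)
        have heq : (∑ i ∈ Finset.range (l+1), fun y => Fm i 0 * F (l-i) y)
            = fun y => ∑ i ∈ Finset.range (l+1), Fm i 0 * F (l-i) y := by
          funext y; simp
        rwa [heq] at h
      rw [intervalIntegral.integral_add hsumint hconvint,
        intervalIntegral.integral_finset_sum (fun i _ => (hFint (l-i) (by omega)).const_mul _)]
      congr 1
      exact Finset.sum_congr rfl (fun i _ => intervalIntegral.integral_const_mul _ _)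
    show (∑ i ∈ Finset.range l, Fm i 0 * F (l-1-i) x) + conv (Fm l) (F 0) x = _
    have hidx : ∀ i, l + 1 - 1 - i = l - i := fun i => by omega
    simp only [hidx]
    rw [hsplit, hcpr]
    have hzero : conv (Fm l) (F 0) 0 = 0 := intervalIntegral.integral_same
    rw [hzero]
    rw [Finset.sum_range_succ]
    have hsum : ∑ i ∈ Finset.range l, Fm i 0 * F (l-1-i) x
        = (∑ i ∈ Finset.range l, Fm i 0 * F (l-1-i) 0)
          + ∑ i ∈ Finset.range l, Fm i 0 * ∫ y in (0:ℝ)..x, F (l-i) y := by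
      rw [← Finset.sum_add_distrib]
      refine Finset.sum_congr rfl (fun i hi => ?_)
      rw [hFstep i (Finset.mem_range.mp hi)]
      ring
    rw [hsum]
    have : l - l = 0 := by omega
    rw [this]
    ring

/-- The basic sequence of iterated derivatives of `M` within `[0,∞)`. -/
lemma base_DSeq {M : ℝ → ℝ} {K : ℕ} {X : ℝ}
    (hM : ContDiffOn ℝ K M (Ici 0)) : DSeq X K (fun l => iteratedDerivWithin l M (Ici 0)) := by
  have hIcc : Icc (0:ℝ) X ⊆ Ici 0 := fun y hy => hy.1
  have hcont : ∀ l ≤ K, ContinuousOn (iteratedDerivWithin l M (Ici 0)) (Icc 0 X) := by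
    intro l hl
    exact (hM.continuousOn_iteratedDerivWithin (by exact_mod_cast hl)
      (uniqueDiffOn_Ici 0)).mono hIcc
  constructor
  · exact hcont
  · intro l hl x hx
    have hderiv : ∀ y ∈ Ioo (0:ℝ) x, HasDerivWithinAt (iteratedDerivWithin l M (Ici 0))
        (iteratedDerivWithin (l+1) M (Ici 0) y) (Ioi y) y := by
      intro y hy
      have hyIci : y ∈ Ici (0:ℝ) := le_of_lt hy.1
      have hd := (hM.differentiableOn_iteratedDerivWithin (n := K) (m := l)
        (by exact_mod_cast hl) (uniqueDiffOn_Ici 0)) y hyIci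
      have h1 : HasDerivWithinAt (iteratedDerivWithin l M (Ici 0))
          (derivWithin (iteratedDerivWithin l M (Ici 0)) (Ici 0) y) (Ici 0) y :=
        hd.hasDerivWithinAt
      rw [← iteratedDerivWithin_succ] at h1
      exact h1.mono (fun z hz => le_of_lt (lt_trans hy.1 hz))
    have hint : IntervalIntegrable (iteratedDerivWithin (l+1) M (Ici 0)) volume 0 x := by
      refine ((hcont (l+1) hl).mono ?_).intervalIntegrable
      rw [uIcc_of_le hx.1]; exact Icc_subset_Icc le_rfl hx.2
    have hFTC := intervalIntegral.integral_eq_sub_of_hasDeriv_right_of_le hx.1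
      ((hcont l hl.le).mono (Icc_subset_Icc le_rfl hx.2)) hderiv hint
    rw [hFTC]
    ring

/-- The inductive sup-norm bound for the convolution step. -/
lemma step_bound {X : ℝ} (hX : 0 ≤ X) {K : ℕ} {Fm F : ℕ → ℝ → ℝ}
    (hFmc : ∀ l ≤ K, ContinuousOn (Fm l) (Icc 0 X))
    (hF0c : ContinuousOn (F 0) (Icc 0 X))
    (n : ℕ → ℝ) (hn : ∀ l ≤ K, ∀ x ∈ Icc (0:ℝ) X, |Fm l x| ≤ n l)
    (N C : ℝ) (hC : 0 ≤ C)
    (hNn : ∀ k ≤ K, (∑ i ∈ Finset.range (k+1), n i) ≤ N)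
    (hFb : ∀ k ≤ K, ∀ x ∈ Icc (0:ℝ) X, |F k x| ≤ C * Real.exp x) :
    ∀ k ≤ K, ∀ x ∈ Icc (0:ℝ) X,
      |(∑ i ∈ Finset.range k, Fm i 0 * F (k-1-i) x) + conv (Fm k) (F 0) x|
        ≤ (N * C) * Real.exp x := by
  intro k hk x hx
  have h0 : (0:ℝ) ∈ Icc (0:ℝ) X := ⟨le_refl _, hX⟩
  have hnneg : ∀ l ≤ K, 0 ≤ n l := fun l hl => (abs_nonneg _).trans (hn l hl 0 h0)
  have hexp1 : 1 ≤ Real.exp x := by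
    rw [← Real.exp_zero]
    exact Real.exp_le_exp.mpr hx.1
  -- bound on the convolution term
  have hmem : ∀ v ∈ Icc (0:ℝ) x, x - v ∈ Icc (0:ℝ) X :=
    fun v hv => ⟨by linarith [hv.2], by linarith [hv.1, hx.2]⟩
  have hmem' : ∀ v ∈ Icc (0:ℝ) x, v ∈ Icc (0:ℝ) X := fun v hv => ⟨hv.1, hv.2.trans hx.2⟩
  have hcont1 : ContinuousOn (fun v => Fm k (x - v) * F 0 v) (Icc 0 x) := by
    refine ContinuousOn.mul ?_ (hF0c.mono hmem')
    exact (hFmc k hk).comp (by fun_prop) hmem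
  have hint1 : IntervalIntegrable (fun v => |Fm k (x - v) * F 0 v|) volume 0 x := by
    refine (hcont1.abs.mono ?_).intervalIntegrable
    rw [uIcc_of_le hx.1]
  have hint2 : IntervalIntegrable (fun v => n k * (C * Real.exp v)) volume 0 x :=
    (continuous_const.mul (continuous_const.mul Real.continuous_exp)).intervalIntegrable _ _
  have hconv : |conv (Fm k) (F 0) x| ≤ n k * (C * (Real.exp x - 1)) := by
    have habs : |conv (Fm k) (F 0) x| ≤ ∫ v in (0:ℝ)..x, |Fm k (x - v) * F 0 v| :=
      intervalIntegral.abs_integral_le_integral_abs hx.1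
    have hmono : (∫ v in (0:ℝ)..x, |Fm k (x - v) * F 0 v|)
        ≤ ∫ v in (0:ℝ)..x, n k * (C * Real.exp v) := by
      refine intervalIntegral.integral_mono_on hx.1 hint1 hint2 (fun v hv => ?_)
      rw [abs_mul]
      exact mul_le_mul (hn k hk _ (hmem v hv)) (hFb 0 (Nat.zero_le _) v (hmem' v hv))
        (abs_nonneg _) (hnneg k hk)
    have hval : (∫ v in (0:ℝ)..x, n k * (C * Real.exp v)) = n k * (C * (Real.exp x - 1)) := by
      rw [intervalIntegral.integral_const_mul, intervalIntegral.integral_const_mul,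
        integral_exp, Real.exp_zero]
    linarith
  -- bound on the sum
  have hsum : |∑ i ∈ Finset.range k, Fm i 0 * F (k-1-i) x|
      ≤ (∑ i ∈ Finset.range k, n i) * (C * Real.exp x) := by
    calc |∑ i ∈ Finset.range k, Fm i 0 * F (k-1-i) x|
        ≤ ∑ i ∈ Finset.range k, |Fm i 0 * F (k-1-i) x| := Finset.abs_sum_le_sum_abs _ _
      _ ≤ ∑ i ∈ Finset.range k, n i * (C * Real.exp x) := by
          refine Finset.sum_le_sum (fun i hi => ?_)
          have hik : i ≤ K := le_trans (le_of_lt (Finset.mem_range.mp hi)) hk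
          rw [abs_mul]
          exact mul_le_mul (hn i hik 0 h0) (hFb (k-1-i) (by omega) x hx) (abs_nonneg _)
            (hnneg i hik)
      _ = (∑ i ∈ Finset.range k, n i) * (C * Real.exp x) := by rw [← Finset.sum_mul]
  have hS : (∑ i ∈ Finset.range k, n i) + n k ≤ N := by
    have := hNn k hk
    rwa [Finset.sum_range_succ] at this
  have hSnn : 0 ≤ ∑ i ∈ Finset.range k, n i :=
    Finset.sum_nonneg (fun i hi => hnneg i (le_trans (le_of_lt (Finset.mem_range.mp hi)) hk))
  have hnk : 0 ≤ n k := hnneg k hk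
  calc |(∑ i ∈ Finset.range k, Fm i 0 * F (k-1-i) x) + conv (Fm k) (F 0) x|
      ≤ |∑ i ∈ Finset.range k, Fm i 0 * F (k-1-i) x| + |conv (Fm k) (F 0) x| := abs_add_le _ _
    _ ≤ (∑ i ∈ Finset.range k, n i) * (C * Real.exp x) + n k * (C * (Real.exp x - 1)) := by
        linarith
    _ ≤ (N * C) * Real.exp x := by
        have he : (0:ℝ) ≤ Real.exp x := le_trans zero_le_one hexp1
        have h1 : ((∑ i ∈ Finset.range k, n i) + n k) * Real.exp x ≤ N * Real.exp x :=
          mul_le_mul_of_nonneg_right hS he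
        have h2 : ((∑ i ∈ Finset.range k, n i) + n k) * Real.exp x * C
            ≤ N * Real.exp x * C := mul_le_mul_of_nonneg_right h1 hC
        have h3 : 0 ≤ n k * C := mul_nonneg hnk hC
        nlinarith [h2, h3]

/-- The combinatorial inequality. -/
lemma comb_bound (β j : ℕ) (hβ : 1 ≤ β) (r : ℝ) (hr : 0 ≤ r) :
    ∑ i ∈ Finset.range (β+1), (β.choose i : ℝ) * ((j.descFactorial i : ℝ) * r ^ (j - i))
      ≤ ((β : ℝ) * (1 + r)) ^ j := by
  have key : ∀ i, (β.choose i * j.descFactorial i : ℕ) ≤ β ^ j * j.choose i := by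
    intro i
    rcases le_or_gt i j with h | h
    · calc β.choose i * j.descFactorial i = β.choose i * (i.factorial * j.choose i) := by
            rw [Nat.descFactorial_eq_factorial_mul_choose]
        _ = (β.choose i * i.factorial) * j.choose i := by ring
        _ ≤ β ^ j * j.choose i := by
            refine Nat.mul_le_mul_right _ ?_
            calc β.choose i * i.factorial = i.factorial * β.choose i := by ring
              _ = β.descFactorial i := (Nat.descFactorial_eq_factorial_mul_choose _ _).symm
              _ ≤ β ^ i := Nat.descFactorial_le_pow _ _
              _ ≤ β ^ j := Nat.pow_le_pow_right hβ h
    · rw [Nat.descFactorial_eq_zero_iff_lt.mpr h]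
      simp
  calc ∑ i ∈ Finset.range (β+1), (β.choose i : ℝ) * ((j.descFactorial i : ℝ) * r ^ (j - i))
      ≤ ∑ i ∈ Finset.range (β+1), ((β:ℝ) ^ j * (j.choose i : ℝ)) * r ^ (j - i) := by
        refine Finset.sum_le_sum (fun i _ => ?_)
        rw [← mul_assoc]
        refine mul_le_mul_of_nonneg_right ?_ (pow_nonneg hr _)
        exact_mod_cast key i
    _ ≤ ∑ i ∈ Finset.range (β+j+1), ((β:ℝ) ^ j * (j.choose i : ℝ)) * r ^ (j - i) := by
        refine Finset.sum_le_sum_of_subset_of_nonneg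
          (Finset.range_subset_range.mpr (by omega)) (fun i _ _ => by positivity)
    _ = ∑ i ∈ Finset.range (j+1), ((β:ℝ) ^ j * (j.choose i : ℝ)) * r ^ (j - i) := by
        refine (Finset.sum_subset (Finset.range_subset_range.mpr (by omega)) ?_).symm
        intro i hi hni
        have hji : j < i := by
          simp only [Finset.mem_range] at hi hni
          omega
        rw [Nat.choose_eq_zero_of_lt hji]
        simp
    _ = (β:ℝ) ^ j * ∑ i ∈ Finset.range (j+1), (1:ℝ) ^ i * r ^ (j - i) * (j.choose i : ℝ) := by
        rw [Finset.mul_sum]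
        exact Finset.sum_congr rfl (fun i _ => by ring)
    _ = (β:ℝ) ^ j * (1 + r) ^ j := by rw [add_pow]
    _ = ((β : ℝ) * (1 + r)) ^ j := (mul_pow _ _ _).symm

end CalMAux

open CalMAux in
/-- Let `α ≥ 0`, `β ≥ 1`, `j ≥ 1`, `M ∈ C^{α+β}([0,∞))`, and set
`ℳ_j(t,s) = ((-s)^j/j!) M^{*j}(t-s)`.  Then for all `t > s`,
`|∂_t^α ∂_s^β ℳ_j(t,s)| ≤ (e^{t-s}/j!) (β (1+|s|) ‖M‖_{C^{α+β}([0,t-s])})^j`,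
where `∂_t^α ∂_s^β` means `α` derivatives in `t` followed by `β` derivatives in `s`. -/
theorem calM_mixed_deriv_bound
    (α β j : ℕ) (hβ : 1 ≤ β) (hj : 1 ≤ j) (M : ℝ → ℝ)
    (hM : ContDiffOn ℝ (α + β) M (Set.Ici 0)) (t s : ℝ) (hts : s < t) :
    |iteratedDeriv β
        (fun s' => iteratedDeriv α
          (fun t' => ((-s') ^ j / (j.factorial : ℝ)) * convPow M j (t' - s')) t) s| ≤
      (Real.exp (t - s) / (j.factorial : ℝ)) *
        ((β : ℝ) * (1 + |s|) * CkNorm (α + β) (t - s) M) ^ j := by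
  set K := α + β with hK
  set X := t - s with hXdef
  have hX : 0 < X := sub_pos.mpr hts
  set X' := X + 1 with hX'def
  have hXX' : X < X' := by linarith
  set Mseq : ℕ → ℝ → ℝ := fun l => iteratedDerivWithin l M (Ici 0) with hMseq
  have hMseqX' : DSeq X' K Mseq := base_DSeq hM
  have hMseqX : DSeq X K Mseq := base_DSeq hM
  set nf : ℕ → ℝ := fun l => ⨆ τ : Icc (0:ℝ) X, |Mseq l τ| with hnf
  set N := CkNorm K X M with hN
  have hNdef : N = ∑ i ∈ Finset.range (K+1), nf i := rfl
  have hn : ∀ l ≤ K, ∀ x ∈ Icc (0:ℝ) X, |Mseq l x| ≤ nf l := by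
    intro l hl x hx
    have hbdd : BddAbove (Set.range fun τ : Icc (0:ℝ) X => |Mseq l τ|) := by
      obtain ⟨C, hC⟩ := isCompact_Icc.exists_bound_of_continuousOn (hMseqX.cont l hl)
      refine ⟨C, ?_⟩
      rintro y ⟨⟨τ, hτ⟩, rfl⟩
      simpa using hC τ hτ
    exact le_ciSup hbdd (⟨x, hx⟩ : Icc (0:ℝ) X)
  have h0X : (0:ℝ) ∈ Icc (0:ℝ) X := ⟨le_refl _, hX.le⟩
  have hnneg : ∀ l ≤ K, 0 ≤ nf l := fun l hl => (abs_nonneg _).trans (hn l hl 0 h0X)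
  have hNn : ∀ k ≤ K, (∑ i ∈ Finset.range (k+1), nf i) ≤ N := by
    intro k hk
    rw [hNdef]
    refine Finset.sum_le_sum_of_subset_of_nonneg (Finset.range_subset_range.mpr (by omega)) ?_
    intro i hi _
    exact hnneg i (by simpa using Nat.lt_succ_iff.mp (Finset.mem_range.mp hi))
  have hNnonneg : 0 ≤ N := by
    rw [hNdef]
    exact Finset.sum_nonneg (fun i hi => hnneg i (Nat.lt_succ_iff.mp (Finset.mem_range.mp hi)))
  -- the main induction on j
  have main : ∀ j, 1 ≤ j → ∃ F : ℕ → ℝ → ℝ, F 0 = convPow M j ∧ DSeq X' K F ∧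
      (∀ k ≤ K, ∀ x ∈ Icc (0:ℝ) X, |F k x| ≤ N ^ j * Real.exp x) := by
    intro j hj
    induction j with
    | zero => omega
    | succ j IH =>
      by_cases hj0 : j = 0
      · subst hj0
        refine ⟨Mseq, ?_, hMseqX', ?_⟩
        · funext x
          show iteratedDerivWithin 0 M (Ici 0) x = convPow M 1 x
          simp [convPow]
        · intro k hk x hx
          have h1 : |Mseq k x| ≤ nf k := hn k hk x hx
          have h2 : nf k ≤ N := by
            rw [hNdef]
            refine Finset.single_le_sum (fun i hi => hnneg i
              (Nat.lt_succ_iff.mp (Finset.mem_range.mp hi))) ?_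
            exact Finset.mem_range.mpr (by omega)
          have h3 : 1 ≤ Real.exp x := by
            rw [← Real.exp_zero]; exact Real.exp_le_exp.mpr hx.1
          calc |Mseq k x| ≤ N := h1.trans h2
            _ ≤ N * Real.exp x := le_mul_of_one_le_right hNnonneg h3
            _ = N ^ 1 * Real.exp x := by rw [pow_one]
      · obtain ⟨F, hF0, hFD, hFb⟩ := IH (by omega)
        refine ⟨fun l x => (∑ i ∈ Finset.range l, Mseq i 0 * F (l-1-i) x)
          + conv (Mseq l) (F 0) x, ?_, DSeq.conv_step (by linarith) hMseqX' hFD, ?_⟩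
        · funext x
          show (∑ i ∈ Finset.range 0, Mseq i 0 * F (0-1-i) x) + conv (Mseq 0) (F 0) x
            = convPow M (j+1) x
          rw [Finset.range_zero, Finset.sum_empty, zero_add]
          have hM0 : Mseq 0 = M := by funext y; simp [hMseq]
          obtain ⟨j', rfl⟩ : ∃ j', j = j' + 1 := ⟨j - 1, by omega⟩
          rw [hM0, hF0]
          rfl
        · have hsb := step_bound hX.le (fun l hl => hMseqX.cont l hl)
            ((hFD.cont 0 (Nat.zero_le _)).mono (Icc_subset_Icc le_rfl hXX'.le))
            nf hn N (N ^ j) (pow_nonneg hNnonneg j) hNn hFb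
          intro k hk x hx
          have := hsb k hk x hx
          calc |(∑ i ∈ Finset.range k, Mseq i 0 * F (k-1-i) x) + conv (Mseq k) (F 0) x|
              ≤ (N * N ^ j) * Real.exp x := this
            _ = N ^ (j+1) * Real.exp x := by rw [pow_succ]; ring
  obtain ⟨F, hF0, hFD, hFb⟩ := main j hj
  -- the neighborhood of s
  set U := Ioo (s - 1) t with hU
  have hsU : s ∈ U := ⟨by linarith, hts⟩
  have hmaps : ∀ s' ∈ U, t - s' ∈ Ioo (0:ℝ) X' := by
    intro s' hs'
    exact ⟨by linarith [hs'.2], by simp only [hX'def, hXdef]; linarith [hs'.1]⟩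
  -- Step A : rewrite the inner iterated derivative
  have eΦ : (fun s' => iteratedDeriv α
        (fun t' => ((-s') ^ j / (j.factorial : ℝ)) * convPow M j (t' - s')) t)
      = fun s' => ((-s') ^ j / (j.factorial : ℝ)) * iteratedDeriv α (convPow M j) (t - s') := by
    funext s'
    rw [iteratedDeriv_const_mul_fun]
    have h := iteratedDeriv_comp_add_const α (convPow M j) (-s')
    simp only [← sub_eq_add_neg] at h
    rw [h]
  rw [eΦ]
  -- Step B : eventually equal to the nice product
  set p : ℝ → ℝ := fun s' => (-s') ^ j / (j.factorial : ℝ) with hp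
  set q : ℝ → ℝ := fun s' => F α (t - s') with hq
  have hα : α ≤ K := by omega
  have hev : (fun s' => ((-s') ^ j / (j.factorial : ℝ)) * iteratedDeriv α (convPow M j) (t - s'))
      =ᶠ[nhds s] fun s' => p s' * q s' := by
    filter_upwards [Ioo_mem_nhds hsU.1 hsU.2] with s' hs'
    have h1 := hFD.iteratedDeriv_eq hα (hmaps s' hs')
    rw [hF0] at h1
    rw [h1]
  rw [Filter.EventuallyEq.iteratedDeriv_eq β hev]
  -- Step C : Leibniz bound
  have hUopen : IsOpen U := isOpen_Ioo
  have hpc : ContDiffOn ℝ (β : WithTop ℕ∞) p U := by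
    have : ContDiff ℝ (β : WithTop ℕ∞) p := by
      have : ContDiff ℝ (β : WithTop ℕ∞) (fun s' : ℝ => (-s') ^ j) :=
        (contDiff_id.neg).pow j
      exact this.div_const _
    exact this.contDiffOn
  have hqc : ContDiffOn ℝ (β : WithTop ℕ∞) q U := by
    have h1 : ContDiffOn ℝ β (F α) (Ioo 0 X') := hFD.contDiffOn_shift le_rfl
    have h2 : ContDiffOn ℝ (β : WithTop ℕ∞) (fun s' : ℝ => t - s') U :=
      (contDiff_const.sub contDiff_id).contDiffOn
    exact h1.comp h2 (fun s' hs' => hmaps s' hs')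
  have hleib := norm_iteratedFDerivWithin_mul_le (𝕜 := ℝ) hpc hqc hUopen.uniqueDiffOn hsU
    (le_refl (β : WithTop ℕ∞))
  -- convert to global iterated derivatives
  have habs : |iteratedDeriv β (fun s' => p s' * q s') s|
      = ‖iteratedFDerivWithin ℝ β (fun s' => p s' * q s') U s‖ := by
    rw [iteratedFDerivWithin_of_isOpen β hUopen hsU, norm_iteratedFDeriv_eq_norm_iteratedDeriv,
      Real.norm_eq_abs]
  -- values of the iterated derivatives of p
  have hpval : ∀ i, ‖iteratedFDerivWithin ℝ i p U s‖
      = (j.descFactorial i : ℝ) / (j.factorial : ℝ) * |s| ^ (j - i) := by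
    intro i
    rw [iteratedFDerivWithin_of_isOpen i hUopen hsU, norm_iteratedFDeriv_eq_norm_iteratedDeriv,
      Real.norm_eq_abs]
    have hpeq : p = fun x : ℝ => ((-1) ^ j / (j.factorial : ℝ)) * x ^ j := by
      funext x
      rw [hp]
      rw [neg_pow]
      ring
    rw [hpeq, iteratedDeriv_const_mul_fun, iteratedDeriv_pow_fun]
    rw [abs_mul, abs_mul, abs_div, abs_pow, abs_neg, abs_one, one_pow, abs_pow]
    rw [Nat.abs_cast, Nat.abs_cast]
    ring
  -- values of the iterated derivatives of q
  have hqder : ∀ i ≤ β, ∀ s' ∈ U, iteratedDeriv i q s' = (-1:ℝ) ^ i * F (α + i) (t - s') := by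
    intro i
    induction i with
    | zero => intro _ s' _; simp [hq]
    | succ i IH =>
      intro hi s' hs'
      rw [iteratedDeriv_succ]
      have hev2 : iteratedDeriv i q =ᶠ[nhds s'] fun w => (-1:ℝ) ^ i * F (α + i) (t - w) := by
        filter_upwards [Ioo_mem_nhds hs'.1 hs'.2] with w hw
        exact IH (by omega) w hw
      rw [hev2.deriv_eq]
      have hhd : HasDerivAt (fun w => F (α + i) (t - w)) (-(F (α + i + 1) (t - s'))) s' := by
        have h2 := hFD.hasDerivAt (l := α + i) (by omega) (hmaps s' hs')
        have h3 : HasDerivAt (fun w : ℝ => t - w) (-1) s' := (hasDerivAt_id s').const_sub t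
        have h4 := h2.comp s' h3
        rw [mul_neg_one] at h4; exact h4
      rw [deriv_const_mul_field, hhd.deriv]
      have hidx : α + (i + 1) = α + i + 1 := by omega
      rw [hidx]
      ring
  have hqval : ∀ i, i ≤ β → ‖iteratedFDerivWithin ℝ (β - i) q U s‖ ≤ N ^ j * Real.exp X := by
    intro i hi
    rw [iteratedFDerivWithin_of_isOpen (β - i) hUopen hsU,
      norm_iteratedFDeriv_eq_norm_iteratedDeriv, Real.norm_eq_abs]
    rw [hqder (β - i) (Nat.sub_le _ _) s hsU]
    rw [abs_mul, abs_pow, abs_neg, abs_one, one_pow, one_mul]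
    have hXX : t - s = X := rfl
    rw [hXX]
    exact hFb (α + (β - i)) (by omega) X ⟨hX.le, le_rfl⟩
  -- assemble
  have hsum : |iteratedDeriv β (fun s' => p s' * q s') s|
      ≤ ∑ i ∈ Finset.range (β + 1), (β.choose i : ℝ)
          * ((j.descFactorial i : ℝ) / (j.factorial : ℝ) * |s| ^ (j - i))
          * (N ^ j * Real.exp X) := by
    rw [habs]
    refine hleib.trans (Finset.sum_le_sum (fun i hi => ?_))
    have hi' : i ≤ β := Nat.lt_succ_iff.mp (Finset.mem_range.mp hi)
    rw [hpval i]
    refine mul_le_mul_of_nonneg_left (hqval i hi') ?_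
    positivity
  refine hsum.trans ?_
  have hfac : (0:ℝ) < (j.factorial : ℝ) := by exact_mod_cast j.factorial_pos
  have hcomb := comb_bound β j hβ |s| (abs_nonneg s)
  calc ∑ i ∈ Finset.range (β + 1), (β.choose i : ℝ)
          * ((j.descFactorial i : ℝ) / (j.factorial : ℝ) * |s| ^ (j - i))
          * (N ^ j * Real.exp X)
      = (N ^ j * Real.exp X / (j.factorial : ℝ)) * ∑ i ∈ Finset.range (β + 1),
          (β.choose i : ℝ) * ((j.descFactorial i : ℝ) * |s| ^ (j - i)) := by
        rw [Finset.mul_sum]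
        exact Finset.sum_congr rfl (fun i _ => by field_simp)
    _ ≤ (N ^ j * Real.exp X / (j.factorial : ℝ)) * ((β : ℝ) * (1 + |s|)) ^ j := by
        refine mul_le_mul_of_nonneg_left hcomb ?_
        positivity
    _ = (Real.exp X / (j.factorial : ℝ)) * ((β : ℝ) * (1 + |s|) * N) ^ j := by
        rw [mul_pow ((β : ℝ) * (1 + |s|)) N j, mul_pow (β : ℝ) (1 + |s|) j]
        ring
end

section
/- Let M : [0,∞) → ℝ be continuous, let t₀ ≥ 0 and T > 0. If ∑_{j=1}^∞ ((λ − t₀)^j / j!) M^{*j}(λ) = 0 for every λ ∈ [0,T], then M(λ) = 0 for every λ ∈ [0,T]. -/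
open Set MeasureTheory

lemma convPow_zero_of_lt (M : ℝ → ℝ) (a : ℝ) (hz : ∀ s, 0 ≤ s → s < a → M s = 0) :
    ∀ j, ∀ s, 0 ≤ s → s < a → convPow M j s = 0 := by
  intro j
  match j with
  | 0 => intro s _ _; rfl
  | 1 => exact hz
  | (j+2) =>
    intro s hs hsa
    show conv M (convPow M (j+1)) s = 0
    unfold conv
    rw [intervalIntegral.integral_congr (g := fun _ => (0:ℝ)) ?_, intervalIntegral.integral_zero]
    intro u hu
    rw [Set.uIcc_of_le hs] at hu
    have : M (s - u) = 0 := hz _ (by linarith [hu.1, hu.2]) (by linarith [hu.1])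
    simp [this]

lemma convPow_le (M : ℝ → ℝ) (a b C₀ m : ℝ) (ha : 0 ≤ a)
    (hC0 : 0 ≤ C₀) (hm0 : 0 ≤ m)
    (hC : ∀ s ∈ Set.Icc (0:ℝ) b, |M s| ≤ C₀) (hm : ∀ s ∈ Set.Icc a b, |M s| ≤ m)
    (hz : ∀ s, 0 ≤ s → s < a → M s = 0) :
    ∀ n : ℕ, ∀ x ∈ Set.Icc a b, |convPow M (n+1) x| ≤ m * C₀^n * (x - a)^n / n.factorial := by
  intro n
  induction n with
  | zero => intro x hx; simpa [convPow] using hm x hx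
  | succ n ih =>
    intro x hx
    obtain ⟨hax, hxb⟩ := hx
    have hx0 : 0 ≤ x := le_trans ha hax
    have hfacpos : (0:ℝ) < (n.factorial : ℝ) := by positivity
    set c : ℝ := C₀ * (m * C₀^n / n.factorial) with hc
    have hc0 : 0 ≤ c := by positivity
    set g : ℝ → ℝ := fun s => if s < a then 0 else c * (s - a)^n with hgdef
    have hgnonneg : ∀ s, 0 ≤ g s := by
      intro s
      simp only [g]
      split
      · exact le_refl 0
      · exact mul_nonneg hc0 (pow_nonneg (by linarith [not_lt.mp ‹¬ s < a›]) n)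
    have hgmono : Monotone g := by
      intro s t hst
      by_cases hs : s < a
      · simpa only [g, if_pos hs] using hgnonneg t
      · have ht : ¬ t < a := fun htc => hs (lt_of_le_of_lt hst htc)
        simp only [g, if_neg hs, if_neg ht]
        exact mul_le_mul_of_nonneg_left
          (pow_le_pow_left₀ (by linarith [not_lt.mp hs]) (by linarith) n) hc0
    have hint : IntervalIntegrable g volume 0 x := hgmono.intervalIntegrable
    have hint1 : IntervalIntegrable g volume 0 a := hgmono.intervalIntegrable
    have hint2 : IntervalIntegrable g volume a x := hgmono.intervalIntegrable
    -- the norm bound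
    have key : ‖∫ s in (0:ℝ)..x, M (x - s) * convPow M (n+1) s‖ ≤ |∫ s in (0:ℝ)..x, g s| := by
      refine intervalIntegral.norm_integral_le_abs_of_norm_le ?_ hint
      refine ae_restrict_of_forall_mem measurableSet_uIoc ?_
      intro t ht
      rw [Set.uIoc_of_le hx0] at ht
      obtain ⟨ht0, htx⟩ := ht
      by_cases hta : t < a
      · have : convPow M (n+1) t = 0 := convPow_zero_of_lt M a hz _ t (le_of_lt ht0) hta
        simp [g, this, if_pos hta]
      · have hta' : a ≤ t := not_lt.mp hta
        have h1 : |M (x - t)| ≤ C₀ := hC _ ⟨by linarith, by linarith⟩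
        have h2 : |convPow M (n+1) t| ≤ m * C₀^n * (t - a)^n / n.factorial :=
          ih t ⟨hta', by linarith⟩
        have : ‖M (x - t) * convPow M (n+1) t‖ = |M (x - t)| * |convPow M (n+1) t| := by
          rw [Real.norm_eq_abs, abs_mul]
        rw [this]
        simp only [g, if_neg hta]
        calc |M (x - t)| * |convPow M (n+1) t| ≤ C₀ * (m * C₀^n * (t - a)^n / n.factorial) :=
              mul_le_mul h1 h2 (abs_nonneg _) hC0
          _ = c * (t - a)^n := by rw [hc]; ring
    -- compute the integral of g
    have hIa : ∫ s in (0:ℝ)..a, g s = 0 := by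
      rw [intervalIntegral.integral_congr_ae (g := fun _ => (0:ℝ)) ?_,
        intervalIntegral.integral_zero]
      rw [MeasureTheory.ae_iff]
      refine measure_mono_null ?_ (measure_singleton a)
      intro y hy
      simp only [Set.mem_setOf_eq, not_forall] at hy
      obtain ⟨hyI, hgy⟩ := hy
      rw [Set.uIoc_of_le ha] at hyI
      simp only [Set.mem_singleton_iff]
      by_contra hne
      have : y < a := lt_of_le_of_ne hyI.2 hne
      exact hgy (by simp [g, if_pos this])
    have hIax : ∫ s in a..x, g s = c * ((x - a)^(n+1) / (n+1)) := by
      have : ∫ s in a..x, g s = ∫ s in a..x, c * (s - a)^n := by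
        refine intervalIntegral.integral_congr_ae ?_
        refine Filter.Eventually.of_forall ?_
        intro y hy
        rw [Set.uIoc_of_le hax] at hy
        simp [g, if_neg (not_lt.mpr (le_of_lt hy.1))]
      rw [this, intervalIntegral.integral_const_mul]
      have h2 : (∫ s in a..x, (s - a)^n) = ∫ s in (0:ℝ)..(x - a), s^n := by
        rw [intervalIntegral.integral_comp_sub_right (fun u => u^n) a, sub_self]
      rw [h2, integral_pow]
      simp
    have hsplit : ∫ s in (0:ℝ)..x, g s = c * ((x - a)^(n+1) / (n+1)) := by
      rw [← intervalIntegral.integral_add_adjacent_intervals hint1 hint2, hIa, hIax, zero_add]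
    have hgoalval : |∫ s in (0:ℝ)..x, g s| = c * ((x - a)^(n+1) / (n+1)) := by
      rw [hsplit, abs_of_nonneg]
      exact mul_nonneg hc0 (div_nonneg (pow_nonneg (by linarith) _) (by positivity))
    have : convPow M (n+1+1) x = ∫ s in (0:ℝ)..x, M (x - s) * convPow M (n+1) s := rfl
    rw [this, ← Real.norm_eq_abs]
    calc ‖∫ s in (0:ℝ)..x, M (x - s) * convPow M (n+1) s‖
        ≤ |∫ s in (0:ℝ)..x, g s| := key
      _ = c * ((x - a)^(n+1) / (n+1)) := hgoalval
      _ = m * C₀^(n+1) * (x - a)^(n+1) / (n+1).factorial := by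
          rw [hc]
          have hfs : ((n+1).factorial : ℝ) = (n+1) * n.factorial := by
            push_cast [Nat.factorial_succ]; ring
          rw [hfs]
          field_simp
          ring

lemma limle {φ ψ : ℝ → ℝ} {s : Set ℝ} {x : ℝ}
    (hφ : ContinuousWithinAt φ s x) (hψ : ContinuousWithinAt ψ s x)
    (hne : (nhdsWithin x s).NeBot) (H : ∀ y ∈ s, φ y ≤ ψ y) : φ x ≤ ψ x := by
  haveI := hne
  exact le_of_tendsto_of_tendsto hφ hψ (eventually_mem_nhdsWithin.mono H)

set_option maxHeartbeats 1000000 in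
lemma vanish_extend (M : ℝ → ℝ) (hM : ContinuousOn M (Set.Ici 0)) (t₀ T : ℝ)
    (ht₀ : 0 ≤ t₀) (hT : 0 < T)
    (h : ∀ lam ∈ Set.Icc (0:ℝ) T,
      ∑' j : ℕ, ((lam - t₀) ^ j / (j.factorial : ℝ)) * convPow M j lam = 0)
    (C₀ A E K δ : ℝ)
    (hC : ∀ s ∈ Set.Icc (0:ℝ) T, |M s| ≤ C₀) (hC0 : 0 ≤ C₀)
    (hA : A = T + t₀) (hE : E = ∑' j : ℕ, (A*C₀*T)^j / (j.factorial : ℝ))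
    (hK : K = C₀ * A * E) (hδ : δ = 1/(K+1)) (hK0 : 0 ≤ K)
    (a : ℝ) (ha0 : 0 ≤ a) (haT : a ≤ T)
    (hz : ∀ s, 0 ≤ s → s < a → M s = 0) :
    ∀ x, 0 ≤ x → x ≤ T → x ≤ a + δ → M x = 0 := by
  have hK1 : (0:ℝ) < K + 1 := by linarith
  have hδpos : 0 < δ := by rw [hδ]; positivity
  set b := min (a + δ) T with hbdef
  have hab : a ≤ b := le_min (by linarith) haT
  have hbT : b ≤ T := min_le_right _ _
  have hb0 : 0 ≤ b := le_trans ha0 hab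
  have hA0 : 0 ≤ A := by rw [hA]; linarith
  -- the sup of |M| on [0,b]
  have hMcont : ContinuousOn (fun s => |M s|) (Set.Icc (0:ℝ) b) :=
    (hM.mono (fun y hy => hy.1)).abs
  have hbdd : BddAbove ((fun s => |M s|) '' Set.Icc (0:ℝ) b) :=
    (isCompact_Icc.image_of_continuousOn hMcont).bddAbove
  set m := sSup ((fun s => |M s|) '' Set.Icc (0:ℝ) b) with hmdef
  have hm : ∀ s ∈ Set.Icc (0:ℝ) b, |M s| ≤ m := fun s hs =>
    le_csSup hbdd ⟨s, hs, rfl⟩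
  have hm0 : 0 ≤ m := le_trans (abs_nonneg (M 0)) (hm 0 ⟨le_refl 0, hb0⟩)
  have hCb : ∀ s ∈ Set.Icc (0:ℝ) b, |M s| ≤ C₀ := fun s hs => hC s ⟨hs.1, le_trans hs.2 hbT⟩
  have claim := convPow_le M a b C₀ m ha0 hC0 hm0 hCb
    (fun s hs => hm s ⟨le_trans ha0 hs.1, hs.2⟩) hz
  have hEsum : Summable (fun j : ℕ => (A*C₀*T)^j / (j.factorial : ℝ)) :=
    Real.summable_pow_div_factorial _
  -- the off-t₀ estimate
  have hoff : ∀ x ∈ Set.Icc a b, x ≠ t₀ → |M x| ≤ (x - a) * (m * K) := by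
    intro x hx hxt
    obtain ⟨hax, hxb⟩ := hx
    have hx0 : 0 ≤ x := le_trans ha0 hax
    have hxT : x ≤ T := le_trans hxb hbT
    have hxa : 0 ≤ x - a := by linarith
    have hxaT : x - a ≤ T := by linarith
    have habs : |x - t₀| ≤ A := abs_le.mpr ⟨by rw [hA]; linarith, by rw [hA]; linarith⟩
    set f : ℕ → ℝ := fun j => ((x - t₀) ^ j / (j.factorial : ℝ)) * convPow M j x with hfdef
    have hfe : ∑' j, f j = 0 := h x ⟨hx0, hxT⟩
    have hb1 : ∀ j : ℕ, ‖f (j+1)‖ ≤ (m * A) * ((A*C₀*T)^j / (j.factorial:ℝ)) := by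
      intro j
      have e0 : ‖f (j+1)‖ = (|x - t₀|^(j+1) / ((j+1).factorial : ℝ)) * |convPow M (j+1) x| := by
        rw [Real.norm_eq_abs, hfdef]
        simp only [abs_mul, abs_div, abs_pow, Nat.abs_cast]
      rw [e0]
      calc (|x - t₀|^(j+1) / ((j+1).factorial : ℝ)) * |convPow M (j+1) x|
          ≤ (A^(j+1) / ((j+1).factorial : ℝ)) * (m * C₀^j * (x-a)^j / (j.factorial:ℝ)) := by
            gcongr (?_ ^ (j+1) / _) * ?_
            exact claim j x ⟨hax, hxb⟩
        _ ≤ (A^(j+1) / 1) * (m * C₀^j * T^j / (j.factorial:ℝ)) := by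
            gcongr
            exact_mod_cast Nat.one_le_iff_ne_zero.mpr (j+1).factorial_ne_zero

        _ = (m * A) * ((A*C₀*T)^j / (j.factorial:ℝ)) := by
            rw [div_one, mul_pow, mul_pow]; ring
    have hSn1 : Summable (fun j => ‖f (j+1)‖) :=
      Summable.of_nonneg_of_le (fun j => norm_nonneg _) hb1 (hEsum.mul_left (m*A))
    have hSn : Summable (fun j => ‖f j‖) := (summable_nat_add_iff 1).mp hSn1
    have hSf : Summable f := hSn.of_norm
    have hs1 : Summable (fun j => f (j+1)) := (summable_nat_add_iff 1).mpr hSf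
    have hf0 : f 0 = 0 := by simp [hfdef, convPow]
    have hf1 : f 1 = (x - t₀) * M x := by simp [hfdef, convPow]
    have e1 : ∑' j, f j = f 0 + ∑' j, f (j+1) := Summable.tsum_eq_zero_add hSf
    have e2 : ∑' j, f (j+1) = f 1 + ∑' j, f (j+1+1) := Summable.tsum_eq_zero_add hs1
    have hfneg : f 1 = - ∑' j, f (j+1+1) := by
      rw [hfe] at e1; rw [e2] at e1; rw [hf0] at e1; linarith
    have hS2 : Summable (fun j => ‖f (j+1+1)‖) :=
      (summable_nat_add_iff (f := fun j => ‖f (j+1)‖) 1).mpr hSn1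
    have hb2 : ∀ j : ℕ, ‖f (j+1+1)‖ ≤
        (|x - t₀| * ((x-a) * (m * (C₀ * A)))) * ((A*C₀*T)^j / (j.factorial:ℝ)) := by
      intro j
      have e0 : ‖f (j+1+1)‖ =
          (|x - t₀|^(j+1+1) / ((j+1+1).factorial : ℝ)) * |convPow M (j+1+1) x| := by
        rw [Real.norm_eq_abs, hfdef]
        simp only [abs_mul, abs_div, abs_pow, Nat.abs_cast]
      have hp1 : |x - t₀|^(j+1+1) ≤ |x - t₀| * A^(j+1) := by
        calc |x - t₀|^(j+1+1) = |x - t₀| * |x - t₀|^(j+1) := by ring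
          _ ≤ |x - t₀| * A^(j+1) :=
              mul_le_mul_of_nonneg_left (pow_le_pow_left₀ (abs_nonneg _) habs _) (abs_nonneg _)
      have hp2 : (x - a)^(j+1) ≤ (x - a) * T^j := by
        calc (x - a)^(j+1) = (x - a) * (x - a)^j := by ring
          _ ≤ (x - a) * T^j := mul_le_mul_of_nonneg_left (pow_le_pow_left₀ hxa hxaT j) hxa
      have hq1 : (1:ℝ) ≤ ((j+1+1).factorial : ℝ) :=
        by exact_mod_cast Nat.one_le_iff_ne_zero.mpr (j+1+1).factorial_ne_zero
      have hq2 : ((j.factorial : ℝ)) ≤ (((j+1).factorial : ℝ)) :=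
        by exact_mod_cast Nat.factorial_le (Nat.le_succ j)
      rw [e0]
      calc (|x - t₀|^(j+1+1) / ((j+1+1).factorial : ℝ)) * |convPow M (j+1+1) x|
          ≤ (|x - t₀|^(j+1+1) / ((j+1+1).factorial : ℝ)) *
              (m * C₀^(j+1) * (x-a)^(j+1) / (((j+1).factorial:ℝ))) := by
            gcongr
            exact claim (j+1) x ⟨hax, hxb⟩
        _ ≤ ((|x - t₀| * A^(j+1)) / 1) *
              (m * C₀^(j+1) * ((x - a) * T^j) / ((j.factorial:ℝ))) := by
            have hd1 : (0:ℝ) < (j.factorial:ℝ) := by positivity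
            apply mul_le_mul
            · apply div_le_div₀ (by positivity) hp1 (by positivity) hq1
            · apply div_le_div₀ (by positivity) ?_ hd1 hq2
              exact mul_le_mul_of_nonneg_left hp2 (by positivity)
            · positivity
            · positivity
        _ = (|x - t₀| * ((x-a) * (m * (C₀ * A)))) * ((A*C₀*T)^j / (j.factorial:ℝ)) := by
            rw [div_one, mul_pow, mul_pow]; ring
    have hfin : |f 1| ≤ (|x - t₀| * ((x-a) * (m * (C₀ * A)))) * E := by
      have s1 : |f 1| = ‖∑' j, f (j+1+1)‖ := by rw [hfneg, Real.norm_eq_abs, abs_neg]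
      have s2 : ‖∑' j, f (j+1+1)‖ ≤ ∑' j, ‖f (j+1+1)‖ := norm_tsum_le_tsum_norm hS2
      have s3 : ∑' j, ‖f (j+1+1)‖ ≤
          ∑' j, ((|x - t₀| * ((x-a) * (m * (C₀ * A)))) * ((A*C₀*T)^j / (j.factorial:ℝ))) :=
        Summable.tsum_le_tsum hb2 hS2 (hEsum.mul_left _)
      have s4 : ∑' j, ((|x - t₀| * ((x-a) * (m * (C₀ * A)))) * ((A*C₀*T)^j / (j.factorial:ℝ)))
          = (|x - t₀| * ((x-a) * (m * (C₀ * A)))) * ∑' j, (A*C₀*T)^j / (j.factorial:ℝ) :=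
        tsum_mul_left
      rw [hE, s1]
      exact le_trans s2 (le_trans s3 (le_of_eq s4))
    have hmul : |x - t₀| * |M x| ≤ |x - t₀| * ((x - a) * (m * K)) := by
      have lhs : |x - t₀| * |M x| = |f 1| := by rw [hf1, abs_mul]
      have rhs : (|x - t₀| * ((x-a) * (m * (C₀ * A)))) * E = |x - t₀| * ((x - a) * (m * K)) := by
        rw [hK]; ring
      rw [lhs, ← rhs]; exact hfin
    exact le_of_mul_le_mul_left hmul (abs_pos.mpr (sub_ne_zero.mpr hxt))
  -- extend to all of [a,b] (including the point t₀) by continuity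
  have hall : ∀ x ∈ Set.Icc a b, |M x| ≤ (x - a) * (m * K) := by
    intro x hx
    by_cases hxt : x = t₀
    swap
    · exact hoff x hx hxt
    obtain ⟨hax, hxb⟩ := hx
    have hx0 : 0 ≤ x := le_trans ha0 hax
    have hψc : Continuous (fun y : ℝ => (y - a) * (m * K)) := by fun_prop
    rcases lt_or_eq_of_le hxb with hlt | heq
    · -- approach from the right within Ioc x b
      refine limle (φ := fun y => |M y|) (ψ := fun y => (y - a) * (m * K))
        (s := Set.Ioc x b) ?_ ?_ ?_ ?_
      · exact ((hM x hx0).mono (fun y hy => le_trans hx0 (le_of_lt hy.1))).abs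
      · exact hψc.continuousWithinAt
      · rw [← mem_closure_iff_nhdsWithin_neBot, closure_Ioc (ne_of_lt hlt)]
        exact ⟨le_refl x, le_of_lt hlt⟩
      · intro y hy
        exact hoff y ⟨le_trans hax (le_of_lt hy.1), hy.2⟩ (by rw [← hxt]; exact ne_of_gt hy.1)
    · rcases lt_or_eq_of_le hax with halt | haeq
      · -- x = b, a < x : approach from the left within Ico a x
        refine limle (φ := fun y => |M y|) (ψ := fun y => (y - a) * (m * K))
          (s := Set.Ico a x) ?_ ?_ ?_ ?_
        · exact ((hM x hx0).mono (fun y hy => le_trans ha0 hy.1)).abs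
        · exact hψc.continuousWithinAt
        · rw [← mem_closure_iff_nhdsWithin_neBot, closure_Ico (ne_of_lt halt)]
          exact ⟨le_of_lt halt, le_refl x⟩
        · intro y hy
          exact hoff y ⟨hy.1, le_trans (le_of_lt hy.2) hxb⟩ (by rw [← hxt]; exact ne_of_lt hy.2)
      · -- a = x = b : then a = T and M vanishes on [0,x)
        have hxpos : 0 < x := by
          rcases le_total (a + δ) T with hcase | hcase
          · exfalso
            have : b = a + δ := by rw [hbdef, min_eq_left hcase]
            rw [this] at heq; rw [← haeq] at heq; linarith
          · have : b = T := by rw [hbdef, min_eq_right hcase]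
            rw [this] at heq; rw [heq]; exact hT
        have hMx : |M x| ≤ 0 := by
          refine limle (φ := fun y => |M y|) (ψ := fun _ => (0:ℝ))
            (s := Set.Ico 0 x) ?_ ?_ ?_ ?_
          · exact ((hM x hx0).mono (fun y hy => hy.1)).abs
          · exact continuous_const.continuousWithinAt
          · rw [← mem_closure_iff_nhdsWithin_neBot, closure_Ico (ne_of_lt hxpos)]
            exact ⟨le_of_lt hxpos, le_refl x⟩
          · intro y hy
            have hzy := hz y hy.1 (by rw [haeq]; exact hy.2)
            simp only [hzy, abs_zero, le_refl]
        calc |M x| ≤ 0 := hMx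
          _ = (x - a) * (m * K) := by rw [← haeq, sub_self, zero_mul]
  -- the sup over [0,b] satisfies m ≤ δ K m, hence m = 0
  have hmle : m ≤ δ * (m * K) := by
    refine csSup_le ⟨|M 0|, Set.mem_image_of_mem _ ⟨le_refl 0, hb0⟩⟩ ?_
    rintro y ⟨xx, hxx, rfl⟩
    show |M xx| ≤ δ * (m * K)
    by_cases hxa : xx < a
    · rw [hz xx hxx.1 hxa]
      simp only [abs_zero]
      positivity
    · calc |M xx| ≤ (xx - a) * (m * K) := hall xx ⟨not_lt.mp hxa, hxx.2⟩
        _ ≤ δ * (m * K) := by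
            apply mul_le_mul_of_nonneg_right ?_ (by positivity)
            have : xx ≤ a + δ := le_trans hxx.2 (min_le_left _ _)
            linarith
  have hmz : m = 0 := by
    rw [hδ] at hmle
    have h3 := mul_le_mul_of_nonneg_right hmle (le_of_lt hK1)
    have h4 : 1 / (K + 1) * (m * K) * (K + 1) = m * K := by field_simp
    rw [h4] at h3
    nlinarith
  intro x hx0 hxT hxδ
  have hxb : x ≤ b := le_min hxδ hxT
  have := hm x ⟨hx0, hxb⟩
  rw [hmz] at this
  exact abs_eq_zero.mp (le_antisymm this (abs_nonneg _))

/-- Let `M : [0,∞) → ℝ` be continuous, `t₀ ≥ 0`, `T > 0`.  If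
`∑_{j≥1} ((λ − t₀)^j/j!) M^{*j}(λ) = 0` for every `λ ∈ [0,T]`, then `M ≡ 0` on `[0,T]`.
(The `j = 0` term of the sum vanishes by the convention `M^{*0} = 0`.) -/
theorem kernel_series_vanishing_implies_M_zero
    (M : ℝ → ℝ) (hM : ContinuousOn M (Set.Ici 0)) (t₀ T : ℝ) (ht₀ : 0 ≤ t₀) (hT : 0 < T)
    (h : ∀ lam ∈ Set.Icc (0:ℝ) T,
      ∑' j : ℕ, ((lam - t₀) ^ j / (j.factorial : ℝ)) * convPow M j lam = 0) :
    ∀ lam ∈ Set.Icc (0:ℝ) T, M lam = 0 := by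
  -- constants
  have hMcont : ContinuousOn (fun s => |M s|) (Set.Icc (0:ℝ) T) :=
    (hM.mono (fun y hy => hy.1)).abs
  have hbdd : BddAbove ((fun s => |M s|) '' Set.Icc (0:ℝ) T) :=
    (isCompact_Icc.image_of_continuousOn hMcont).bddAbove
  set C₀ := sSup ((fun s => |M s|) '' Set.Icc (0:ℝ) T) with hC₀def
  have hC : ∀ s ∈ Set.Icc (0:ℝ) T, |M s| ≤ C₀ := fun s hs => le_csSup hbdd ⟨s, hs, rfl⟩
  have hC0 : 0 ≤ C₀ := le_trans (abs_nonneg (M 0)) (hC 0 ⟨le_refl 0, le_of_lt hT⟩)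
  set A : ℝ := T + t₀ with hAdef
  have hA0 : 0 ≤ A := by rw [hAdef]; linarith
  set E : ℝ := ∑' j : ℕ, (A*C₀*T)^j / (j.factorial : ℝ) with hEdef
  have hE0 : 0 ≤ E := tsum_nonneg (fun j => by positivity)
  set K : ℝ := C₀ * A * E with hKdef
  have hK0 : 0 ≤ K := by positivity
  set δ : ℝ := 1/(K+1) with hδdef
  have hδpos : 0 < δ := by rw [hδdef]; positivity
  have step := vanish_extend M hM t₀ T ht₀ hT h C₀ A E K δ hC hC0 hAdef hEdef hKdef hδdef hK0
  have main : ∀ k : ℕ, ∀ x, 0 ≤ x → x ≤ T → x < (k : ℝ) * δ → M x = 0 := by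
    intro k
    induction k with
    | zero => intro x hx0 _ hxk; norm_num at hxk; linarith
    | succ k ih =>
      intro x hx0 hxT hxk
      by_cases hc : x < (k : ℝ) * δ
      · exact ih x hx0 hxT hc
      · push_neg at hc
        have haa : 0 ≤ min ((k:ℝ)*δ) T := le_min (by positivity) (le_of_lt hT)
        refine step (min ((k:ℝ)*δ) T) haa (min_le_right _ _) ?_ x hx0 hxT ?_
        · intro s hs0 hsa
          exact ih s hs0 (le_trans (le_of_lt hsa) (min_le_right _ _))
            (lt_of_lt_of_le hsa (min_le_left _ _))
        · rcases le_total ((k:ℝ)*δ) T with hkT | hkT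
          · rw [min_eq_left hkT]
            push_cast at hxk
            linarith
          · rw [min_eq_right hkT]
            linarith
  obtain ⟨k, hk⟩ := exists_nat_gt (T/δ)
  have hTk : T < (k : ℝ) * δ := by
    rw [div_lt_iff₀ hδpos] at hk
    linarith
  intro lam hlam
  exact main k lam hlam.1 hlam.2 (lt_of_le_of_lt hlam.2 hTk)
end

section
/- Let M : [0,∞) → ℝ be continuous and let λ ∈ ℝ. Then for every t ≥ 0, ∫_0^t e^{-λ(t-s)} |K_M(t,s)| ds ≤ exp( t ∫_0^t e^{-λτ} |M(τ)| dτ ) − 1, where K_M(t,s) := ∑_{j=1}^∞ ((-s)^j / j!) M^{*j}(t-s). -/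
open Set MeasureTheory
open scoped ENNReal

/-- The flow kernel `K_M(t,s) = ∑_{j≥1} ((-s)^j / j!) M^{*j}(t-s)`. -/
noncomputable def KM (M : ℝ → ℝ) (t s : ℝ) : ℝ :=
  ∑' j : ℕ, ((-s) ^ j / (j.factorial : ℝ)) * convPow M j (t - s)

lemma conv_continuous {f g : ℝ → ℝ} (hf : Continuous f) (hg : Continuous g) :
    Continuous (conv f g) := by
  have : Continuous (Function.uncurry fun t s => f (t - s) * g s) :=
    ((hf.comp (continuous_fst.sub continuous_snd)).mul (hg.comp continuous_snd))
  exact intervalIntegral.continuous_parametric_intervalIntegral_of_continuous this continuous_id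

lemma convPow_continuous {M : ℝ → ℝ} (hM : Continuous M) (j : ℕ) :
    Continuous (convPow M j) := by
  induction j using Nat.strong_induction_on with
  | _ j ih =>
    match j with
    | 0 => exact continuous_const
    | 1 => exact hM
    | (j+2) => exact conv_continuous hM (ih (j+1) (by omega))

/-- weight-transfer: convPow of `e^{-λx} M x` -/
lemma convPow_exp_smul (M : ℝ → ℝ) (lam : ℝ) (j : ℕ) (τ : ℝ) :
    convPow (fun x => Real.exp (-lam * x) * M x) j τ
      = Real.exp (-lam * τ) * convPow M j τ := by
  induction j using Nat.strong_induction_on generalizing τ with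
  | _ j ih =>
    match j with
    | 0 => simp [convPow]
    | 1 => simp [convPow]
    | (j+2) =>
      show (∫ s in (0:ℝ)..τ, (Real.exp (-lam * (τ - s)) * M (τ - s)) *
          convPow (fun x => Real.exp (-lam * x) * M x) (j+1) s) = _
      have h : ∀ s : ℝ, (Real.exp (-lam * (τ - s)) * M (τ - s)) *
          convPow (fun x => Real.exp (-lam * x) * M x) (j+1) s
          = Real.exp (-lam * τ) * (M (τ - s) * convPow M (j+1) s) := by
        intro s
        rw [ih (j+1) (by omega) s]
        rw [show -lam * τ = (-lam * (τ - s)) + (-lam * s) by ring, Real.exp_add]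
        ring
      simp_rw [h]
      rw [intervalIntegral.integral_const_mul]
      rfl

/-- truncation invariance on nonneg arguments -/
lemma convPow_congr_nonneg {M M' : ℝ → ℝ} (h : ∀ x, 0 ≤ x → M x = M' x) (j : ℕ) :
    ∀ τ : ℝ, 0 ≤ τ → convPow M j τ = convPow M' j τ := by
  induction j using Nat.strong_induction_on with
  | _ j ih =>
    match j with
    | 0 => intro τ _; rfl
    | 1 => intro τ hτ; exact h τ hτ
    | (j+2) =>
      intro τ hτ
      show (∫ s in (0:ℝ)..τ, M (τ - s) * convPow M (j+1) s)
          = ∫ s in (0:ℝ)..τ, M' (τ - s) * convPow M' (j+1) s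
      apply intervalIntegral.integral_congr
      intro s hs
      rw [uIcc_of_le hτ] at hs
      simp only []
      rw [h (τ - s) (by simp only [mem_Icc] at hs; linarith [hs.1, hs.2]),
        ih (j+1) (by omega) s hs.1]

lemma convPow_bound {M : ℝ → ℝ} (hM : Continuous M) {t C : ℝ} (ht : 0 ≤ t)
    (hC0 : 0 ≤ C) (hC : ∀ x ∈ Icc (0:ℝ) t, |M x| ≤ C) :
    ∀ j : ℕ, ∀ τ ∈ Icc (0:ℝ) t, |convPow M (j+1) τ| ≤ C^(j+1) * τ^j / (j.factorial : ℝ) := by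
  intro j
  induction j with
  | zero => intro τ hτ; simpa [convPow] using hC τ hτ
  | succ j ih =>
    intro τ hτ
    obtain ⟨hτ0, hτt⟩ := hτ
    have key : |convPow M (j+2) τ| ≤ ∫ s in (0:ℝ)..τ, |M (τ - s) * convPow M (j+1) s| :=
      intervalIntegral.abs_integral_le_integral_abs hτ0
    have hcont : Continuous (convPow M (j+1)) := convPow_continuous hM (j+1)
    have step : (∫ s in (0:ℝ)..τ, |M (τ - s) * convPow M (j+1) s|)
        ≤ ∫ s in (0:ℝ)..τ, C * (C^(j+1) * s^j / (j.factorial : ℝ)) := by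
      apply intervalIntegral.integral_mono_on hτ0
      · exact (((hM.comp (continuous_const.sub continuous_id)).mul hcont).abs).intervalIntegrable _ _
      · exact (Continuous.intervalIntegrable (by continuity) _ _)
      · intro s hs
        obtain ⟨hs0, hsτ⟩ := hs
        rw [abs_mul]
        have h1 : |M (τ - s)| ≤ C := hC _ ⟨by linarith, by linarith⟩
        have h2 : |convPow M (j+1) s| ≤ C^(j+1) * s^j / (j.factorial : ℝ) :=
          ih s ⟨hs0, by linarith⟩
        have := mul_le_mul h1 h2 (abs_nonneg _) hC0
        linarith
    have comp : (∫ s in (0:ℝ)..τ, C * (C^(j+1) * s^j / (j.factorial : ℝ)))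
        = C^(j+2) * τ^(j+1) / ((j+1).factorial : ℝ) := by
      rw [intervalIntegral.integral_const_mul]
      have : (∫ s in (0:ℝ)..τ, C^(j+1) * s^j / (j.factorial : ℝ))
          = (C^(j+1) / (j.factorial : ℝ)) * ∫ s in (0:ℝ)..τ, s^j := by
        rw [← intervalIntegral.integral_const_mul]
        congr 1; funext s; ring
      rw [this, integral_pow, Nat.factorial_succ]
      push_cast
      field_simp
      ring
    calc |convPow M (j+2) τ| ≤ _ := key
      _ ≤ _ := step
      _ = _ := comp

lemma conv_L1_bound {f g : ℝ → ℝ} (hf : Continuous f) (hg : Continuous g) {t : ℝ}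
    (ht : 0 ≤ t) :
    ∫ τ in (0:ℝ)..t, |conv f g τ| ≤ (∫ τ in (0:ℝ)..t, |f τ|) * (∫ τ in (0:ℝ)..t, |g τ|) := by
  haveI : Fact (volume (Ioc (0:ℝ) t) < ∞) := ⟨measure_Ioc_lt_top⟩
  set μ := volume.restrict (Ioc (0:ℝ) t) with hμ
  set a : ℝ := ∫ τ in (0:ℝ)..t, |f τ| with ha
  have ha0 : 0 ≤ a := intervalIntegral.integral_nonneg ht (fun x _ => abs_nonneg _)
  set H : ℝ × ℝ → ℝ := fun p => if p.2 ≤ p.1 then |f (p.1 - p.2)| * |g p.2| else 0 with hH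
  obtain ⟨Cf, hCf⟩ : ∃ C, ∀ x ∈ Icc (-t) t, |f x| ≤ C := by
    obtain ⟨C, hC⟩ := (isCompact_Icc (a := -t) (b := t)).exists_bound_of_continuousOn
      hf.continuousOn
    exact ⟨C, by simpa using hC⟩
  obtain ⟨Cg, hCg⟩ : ∃ C, ∀ x ∈ Icc (0:ℝ) t, |g x| ≤ C := by
    obtain ⟨C, hC⟩ := (isCompact_Icc (a := (0:ℝ)) (b := t)).exists_bound_of_continuousOn
      hg.continuousOn
    exact ⟨C, by simpa using hC⟩
  have hHmeas : Measurable H := by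
    apply Measurable.ite (measurableSet_le measurable_snd measurable_fst)
    · exact ((hf.comp (continuous_fst.sub continuous_snd)).abs.mul
        (hg.comp continuous_snd).abs).measurable
    · exact measurable_const
  have hHint : Integrable (Function.uncurry fun τ s => H (τ, s)) (μ.prod μ) := by
    have : Function.uncurry (fun τ s => H (τ, s)) = H := rfl
    rw [this]
    refine Integrable.mono' (integrable_const (Cf * Cg)) hHmeas.aestronglyMeasurable ?_
    rw [hμ, Measure.prod_restrict]
    refine (ae_restrict_iff' ((measurableSet_Ioc).prod measurableSet_Ioc)).2 (ae_of_all _ ?_)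
    intro p hp
    obtain ⟨⟨h1, h2⟩, h3, h4⟩ := hp
    rw [hH]
    dsimp only
    split_ifs with hle
    · rw [Real.norm_eq_abs, abs_mul, abs_abs, abs_abs]
      have hb1 : |f (p.1 - p.2)| ≤ Cf := hCf _ ⟨by linarith, by linarith⟩
      have hb2 : |g p.2| ≤ Cg := hCg _ ⟨le_of_lt h3, h4⟩
      exact mul_le_mul hb1 hb2 (abs_nonneg _) ((abs_nonneg _).trans hb1)
    · simp only [norm_zero]
      have hb1 : (0:ℝ) ≤ Cf := (abs_nonneg _).trans (hCf 0 ⟨by linarith, ht⟩)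
      have hb2 : (0:ℝ) ≤ Cg := (abs_nonneg _).trans (hCg 0 ⟨le_refl _, ht⟩)
      positivity
  have step1 : ∀ τ ∈ Icc (0:ℝ) t, |conv f g τ| ≤ ∫ s, H (τ, s) ∂μ := by
    intro τ hτ
    obtain ⟨hτ0, hτt⟩ := hτ
    have e1 : (fun s => H (τ, s)) = (Iic τ).indicator (fun s => |f (τ - s)| * |g s|) := by
      funext s
      simp only [hH, Set.indicator_apply, mem_Iic]
    have e2 : ∫ s, H (τ, s) ∂μ = ∫ s in Ioc (0:ℝ) τ, |f (τ - s)| * |g s| := by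
      rw [hμ, e1, setIntegral_indicator measurableSet_Iic,
        show Ioc (0:ℝ) t ∩ Iic τ = Ioc 0 τ by
          ext x; simp only [mem_inter_iff, mem_Ioc, mem_Iic]; constructor
          · rintro ⟨⟨h1, _⟩, h3⟩; exact ⟨h1, h3⟩
          · rintro ⟨h1, h2⟩; exact ⟨⟨h1, h2.trans hτt⟩, h2⟩]
    rw [e2, ← intervalIntegral.integral_of_le hτ0]
    calc |conv f g τ| ≤ ∫ s in (0:ℝ)..τ, |f (τ - s) * g s| :=
          intervalIntegral.abs_integral_le_integral_abs hτ0
      _ = ∫ s in (0:ℝ)..τ, |f (τ - s)| * |g s| := by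
          congr 1; funext s; rw [abs_mul]
  have hconv_cont : Continuous (conv f g) := conv_continuous hf hg
  have step2 : ∫ τ in (0:ℝ)..t, |conv f g τ| ≤ ∫ τ, (∫ s, H (τ, s) ∂μ) ∂μ := by
    rw [intervalIntegral.integral_of_le ht]
    refine setIntegral_mono_on (hconv_cont.abs.integrableOn_Ioc) ?_ measurableSet_Ioc ?_
    · exact hHint.integral_prod_left
    · intro τ hτ
      exact step1 τ ⟨le_of_lt hτ.1, hτ.2⟩
  have step3 : ∫ τ, (∫ s, H (τ, s) ∂μ) ∂μ = ∫ s, (∫ τ, H (τ, s) ∂μ) ∂μ :=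
    integral_integral_swap hHint
  have step4 : ∀ s ∈ Ioc (0:ℝ) t, (∫ τ, H (τ, s) ∂μ) ≤ |g s| * a := by
    intro s hs
    obtain ⟨hs0, hst⟩ := hs
    have e1 : (fun τ => H (τ, s)) = fun τ => |g s| * (Ici s).indicator (fun τ => |f (τ - s)|) τ := by
      funext τ
      simp only [hH, Set.indicator_apply, mem_Ici]
      split_ifs with h
      · ring
      · ring
    rw [e1, integral_const_mul]
    have e2 : ∫ τ, (Ici s).indicator (fun τ => |f (τ - s)|) τ ∂μ
        = ∫ τ in Ioc s t, |f (τ - s)| := by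
      rw [hμ, setIntegral_indicator measurableSet_Ici,
        show Ioc (0:ℝ) t ∩ Ici s = Ioc s t ∪ {s} by
          ext x; simp only [mem_inter_iff, mem_Ioc, mem_Ici, mem_union, mem_singleton_iff]
          constructor
          · rintro ⟨⟨h1, h2⟩, h3⟩
            rcases eq_or_lt_of_le h3 with h | h
            · right; exact h.symm
            · left; exact ⟨h, h2⟩
          · rintro (⟨h1, h2⟩ | rfl)
            · exact ⟨⟨hs0.trans h1, h2⟩, le_of_lt h1⟩
            · exact ⟨⟨hs0, hst⟩, le_refl _⟩]
      rw [show Ioc s t ∪ {s} = Icc s t by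
          ext x; simp only [mem_union, mem_Ioc, mem_singleton_iff, mem_Icc]
          constructor
          · rintro (⟨h1, h2⟩ | rfl); exact ⟨le_of_lt h1, h2⟩; exact ⟨le_refl _, hst⟩
          · rintro ⟨h1, h2⟩
            rcases eq_or_lt_of_le h1 with h | h
            · right; exact h.symm
            · left; exact ⟨h, h2⟩]
      rw [integral_Icc_eq_integral_Ioc]
    rw [e2]
    have e3 : (∫ τ in Ioc s t, |f (τ - s)|) = ∫ u in (0:ℝ)..(t - s), |f u| := by
      rw [← intervalIntegral.integral_of_le hst]
      rw [intervalIntegral.integral_comp_sub_right (fun x => |f x|) s]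
      norm_num
    rw [e3]
    have e4 : (∫ u in (0:ℝ)..(t - s), |f u|) ≤ a := by
      rw [ha, ← intervalIntegral.integral_add_adjacent_intervals
        (a := (0:ℝ)) (b := t - s) (c := t)
        (hf.abs.intervalIntegrable _ _) (hf.abs.intervalIntegrable _ _)]
      have : 0 ≤ ∫ u in (t - s)..t, |f u| :=
        intervalIntegral.integral_nonneg (by linarith) (fun x _ => abs_nonneg _)
      linarith
    exact mul_le_mul_of_nonneg_left e4 (abs_nonneg _)
  have step5 : ∫ s, (∫ τ, H (τ, s) ∂μ) ∂μ ≤ ∫ s in Ioc (0:ℝ) t, |g s| * a := by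
    rw [hμ]
    refine setIntegral_mono_on ?_ ?_ measurableSet_Ioc ?_
    · exact (hHint.swap).integral_prod_left
    · exact (hg.abs.mul continuous_const).integrableOn_Ioc
    · intro s hs
      exact step4 s hs
  have step6 : (∫ s in Ioc (0:ℝ) t, |g s| * a) = a * ∫ s in (0:ℝ)..t, |g s| := by
    rw [intervalIntegral.integral_of_le ht]
    rw [show (fun s => |g s| * a) = fun s => a * |g s| by funext s; ring]
    exact integral_const_mul a _
  have := step2.trans (step3.le.trans (step5.trans step6.le))
  rw [ha] at this
  exact this

lemma convPow_L1_bound {M : ℝ → ℝ} (hM : Continuous M) {t : ℝ} (ht : 0 ≤ t) :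
    ∀ j : ℕ, (∫ τ in (0:ℝ)..t, |convPow M (j+1) τ|)
      ≤ (∫ τ in (0:ℝ)..t, |M τ|) ^ (j+1) := by
  have ha0 : 0 ≤ ∫ τ in (0:ℝ)..t, |M τ| :=
    intervalIntegral.integral_nonneg ht (fun x _ => abs_nonneg _)
  intro j
  induction j with
  | zero => rw [pow_one]; exact le_of_eq rfl
  | succ j ih =>
    have h1 : (∫ τ in (0:ℝ)..t, |convPow M (j+2) τ|)
        ≤ (∫ τ in (0:ℝ)..t, |M τ|) * (∫ τ in (0:ℝ)..t, |convPow M (j+1) τ|) :=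
      conv_L1_bound hM (convPow_continuous hM (j+1)) ht
    calc (∫ τ in (0:ℝ)..t, |convPow M (j+2) τ|)
        ≤ (∫ τ in (0:ℝ)..t, |M τ|) * (∫ τ in (0:ℝ)..t, |convPow M (j+1) τ|) := h1
      _ ≤ (∫ τ in (0:ℝ)..t, |M τ|) * (∫ τ in (0:ℝ)..t, |M τ|) ^ (j+1) :=
          mul_le_mul_of_nonneg_left ih ha0
      _ = (∫ τ in (0:ℝ)..t, |M τ|) ^ (j+2) := by ring

set_option maxHeartbeats 1000000 in
lemma KM_key {M : ℝ → ℝ} (hM : Continuous M) {t : ℝ} (ht : 0 ≤ t) :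
    (∫ s in (0:ℝ)..t, |KM M t s|) ≤ Real.exp (t * ∫ τ in (0:ℝ)..t, |M τ|) - 1 := by
  set a : ℝ := ∫ τ in (0:ℝ)..t, |M τ| with ha
  have ha0 : 0 ≤ a := intervalIntegral.integral_nonneg ht (fun x _ => abs_nonneg _)
  obtain ⟨C₀, hC₀⟩ := (isCompact_Icc (a := (0:ℝ)) (b := t)).exists_bound_of_continuousOn
    hM.continuousOn
  set C : ℝ := max C₀ 0 with hCdef
  have hC0 : 0 ≤ C := le_max_right _ _
  have hC : ∀ x ∈ Icc (0:ℝ) t, |M x| ≤ C := by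
    intro x hx
    have := hC₀ x hx
    rw [Real.norm_eq_abs] at this
    exact this.trans (le_max_left _ _)
  have hD0 : (0:ℝ) ≤ C * (1 + t) := by positivity
  -- crude uniform bound
  have hcrude : ∀ j : ℕ, ∀ τ ∈ Icc (0:ℝ) t, |convPow M j τ| ≤ (C*(1+t))^j := by
    intro j τ hτ
    match j with
    | 0 => simp [convPow]
    | (j+1) =>
      have h1 := convPow_bound hM ht hC0 hC j τ hτ
      have hτ1 : τ^j ≤ (1+t)^j := pow_le_pow_left₀ hτ.1 (by linarith [hτ.2]) j
      have hfac : (1:ℝ) ≤ (j.factorial:ℝ) := by exact_mod_cast j.factorial_pos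
      have h2 : C^(j+1) * τ^j / (j.factorial:ℝ) ≤ C^(j+1) * τ^j :=
        div_le_self (mul_nonneg (pow_nonneg hC0 _) (pow_nonneg hτ.1 _)) hfac
      have h3 : C^(j+1) * τ^j ≤ C^(j+1) * (1+t)^j :=
        mul_le_mul_of_nonneg_left hτ1 (by positivity)
      have h4 : C^(j+1) * (1+t)^j ≤ C^(j+1) * (1+t)^(j+1) := by
        apply mul_le_mul_of_nonneg_left _ (by positivity)
        apply pow_le_pow_right₀ (by linarith) (by omega)
      rw [mul_pow]
      linarith
  set b : ℕ → ℝ := fun j => (t*(C*(1+t)))^j / (j.factorial:ℝ) with hb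
  have hb_sum : Summable b := Real.summable_pow_div_factorial _
  have hb0 : ∀ j, 0 ≤ b j := by
    intro j
    rw [hb]
    positivity
  set u : ℕ → ℝ → ℝ := fun j s => ((-s)^j / (j.factorial:ℝ)) * convPow M j (t - s) with hu
  have hu_cont : ∀ j, Continuous (u j) := by
    intro j
    rw [hu]
    exact (((continuous_neg).pow j).div_const _).mul
      ((convPow_continuous hM j).comp (continuous_const.sub continuous_id))
  have hu_bound : ∀ j : ℕ, ∀ s ∈ Icc (0:ℝ) t, |u j s| ≤ b j := by
    intro j s hs
    obtain ⟨hs0, hst⟩ := hs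
    rw [hu, hb]
    dsimp only
    rw [abs_mul, abs_div, abs_pow, abs_neg]
    have e1 : |s| = s := abs_of_nonneg hs0
    have e2 : |(j.factorial:ℝ)| = (j.factorial:ℝ) := abs_of_nonneg (by positivity)
    rw [e1, e2]
    have h1 : s^j ≤ t^j := pow_le_pow_left₀ hs0 hst j
    have h2 : |convPow M j (t - s)| ≤ (C*(1+t))^j :=
      hcrude j (t - s) ⟨by linarith, by linarith⟩
    have hfacpos : (0:ℝ) < (j.factorial:ℝ) := by positivity
    rw [mul_pow, mul_comm (t^j) ((C*(1+t))^j)]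
    calc s^j / (j.factorial:ℝ) * |convPow M j (t - s)|
        ≤ t^j / (j.factorial:ℝ) * (C*(1+t))^j := by
          apply mul_le_mul _ h2 (abs_nonneg _) (by positivity)
          gcongr
      _ = (C*(1+t))^j * t^j / (j.factorial:ℝ) := by ring
  have hKM_eq : ∀ s : ℝ, KM M t s = ∑' j, u j s := fun s => rfl
  have hsum_norm : ∀ s ∈ Icc (0:ℝ) t, Summable (fun j => ‖u j s‖) := fun s hs =>
    Summable.of_nonneg_of_le (fun j => norm_nonneg _) (fun j => hu_bound j s hs) hb_sum
  have hKM_le : ∀ s ∈ Icc (0:ℝ) t, |KM M t s| ≤ ∑' j, |u j s| := by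
    intro s hs
    rw [hKM_eq]
    simpa [Real.norm_eq_abs] using norm_tsum_le_tsum_norm (hsum_norm s hs)
  have hKM_cont : ContinuousOn (fun s => KM M t s) (Icc (0:ℝ) t) := by
    have : (fun s => KM M t s) = fun s => ∑' j, u j s := funext hKM_eq
    rw [this]
    refine continuousOn_tsum (fun j => (hu_cont j).continuousOn) hb_sum ?_
    intro n x hx
    exact hu_bound n x hx
  have hV_cont : ContinuousOn (fun s => ∑' j, |u j s|) (Icc (0:ℝ) t) := by
    refine continuousOn_tsum (fun j => (hu_cont j).abs.continuousOn) hb_sum ?_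
    intro n x hx
    rw [Real.norm_eq_abs, abs_abs]
    exact hu_bound n x hx
  haveI : Fact (volume (Ioc (0:ℝ) t) < ∞) := ⟨measure_Ioc_lt_top⟩
  have hmono : (∫ s in (0:ℝ)..t, |KM M t s|) ≤ ∫ s in Ioc (0:ℝ) t, ∑' j, |u j s| := by
    rw [intervalIntegral.integral_of_le ht]
    apply setIntegral_mono_on
    · exact (hKM_cont.abs.integrableOn_Icc).mono_set Ioc_subset_Icc_self
    · exact (hV_cont.integrableOn_Icc).mono_set Ioc_subset_Icc_self
    · exact measurableSet_Ioc
    · intro s hs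
      exact hKM_le s ⟨le_of_lt hs.1, hs.2⟩
  have hswap : (∫ s in Ioc (0:ℝ) t, ∑' j, |u j s|) = ∑' j, ∫ s in Ioc (0:ℝ) t, |u j s| := by
    apply integral_tsum
    · intro i
      exact ((hu_cont i).abs).aestronglyMeasurable
    · have hle : ∀ j : ℕ, (∫⁻ s in Ioc (0:ℝ) t, ‖|u j s|‖₊)
          ≤ ENNReal.ofReal (b j) * ENNReal.ofReal t := by
        intro j
        have h1 : (∫⁻ s in Ioc (0:ℝ) t, ‖|u j s|‖₊)
            ≤ ∫⁻ _ in Ioc (0:ℝ) t, ENNReal.ofReal (b j) := by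
          apply setLIntegral_mono' measurableSet_Ioc
          intro s hs
          rw [← enorm_eq_nnnorm, ← ofReal_norm]
          apply ENNReal.ofReal_le_ofReal
          rw [Real.norm_eq_abs, abs_abs]
          exact hu_bound j s ⟨le_of_lt hs.1, hs.2⟩
        rw [setLIntegral_const, Real.volume_Ioc, sub_zero] at h1
        exact h1
      have : (∑' j, ∫⁻ s in Ioc (0:ℝ) t, ‖|u j s|‖₊)
          ≤ ∑' j, ENNReal.ofReal (b j) * ENNReal.ofReal t := ENNReal.tsum_le_tsum hle
      refine ne_top_of_le_ne_top ?_ this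
      rw [ENNReal.tsum_mul_right, ← ENNReal.ofReal_tsum_of_nonneg hb0 hb_sum]
      exact ENNReal.mul_ne_top ENNReal.ofReal_ne_top ENNReal.ofReal_ne_top
  -- termwise bounds
  have hterm0 : (∫ s in Ioc (0:ℝ) t, |u 0 s|) = 0 := by
    have : ∀ s : ℝ, |u 0 s| = 0 := by
      intro s
      rw [hu]
      simp [convPow]
    simp [this]
  have hterm : ∀ j : ℕ, (∫ s in Ioc (0:ℝ) t, |u (j+1) s|)
      ≤ (t*a)^(j+1) / ((j+1).factorial : ℝ) := by
    intro j
    set c : ℝ := t^(j+1) / ((j+1).factorial : ℝ) with hc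
    have hc0 : 0 ≤ c := by rw [hc]; positivity
    have h1 : (∫ s in Ioc (0:ℝ) t, |u (j+1) s|)
        ≤ ∫ s in Ioc (0:ℝ) t, c * |convPow M (j+1) (t - s)| := by
      apply setIntegral_mono_on
      · exact ((hu_cont (j+1)).abs.integrableOn_Ioc)
      · exact ((continuous_const.mul (((convPow_continuous hM (j+1)).comp
          (continuous_const.sub continuous_id)).abs)).integrableOn_Ioc)
      · exact measurableSet_Ioc
      · intro s hs
        obtain ⟨hs0, hst⟩ := hs
        rw [hu]
        dsimp only
        rw [abs_mul, abs_div, abs_pow, abs_neg, abs_of_nonneg (le_of_lt hs0),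
          abs_of_nonneg (show (0:ℝ) ≤ ((j+1).factorial : ℝ) by positivity), hc]
        apply mul_le_mul_of_nonneg_right _ (abs_nonneg _)
        apply div_le_div_of_nonneg_right _ (by positivity)
        exact pow_le_pow_left₀ (le_of_lt hs0) hst (j+1)
    have h2 : (∫ s in Ioc (0:ℝ) t, c * |convPow M (j+1) (t - s)|)
        = c * ∫ s in (0:ℝ)..t, |convPow M (j+1) (t - s)| := by
      rw [intervalIntegral.integral_of_le ht, integral_const_mul]
    have h3 : (∫ s in (0:ℝ)..t, |convPow M (j+1) (t - s)|)
        = ∫ τ in (0:ℝ)..t, |convPow M (j+1) τ| := by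
      rw [intervalIntegral.integral_comp_sub_left (fun x => |convPow M (j+1) x|) t]
      norm_num
    have h4 := convPow_L1_bound hM ht j
    calc (∫ s in Ioc (0:ℝ) t, |u (j+1) s|)
        ≤ c * ∫ s in (0:ℝ)..t, |convPow M (j+1) (t - s)| := h1.trans h2.le
      _ = c * ∫ τ in (0:ℝ)..t, |convPow M (j+1) τ| := by rw [h3]
      _ ≤ c * a^(j+1) := mul_le_mul_of_nonneg_left (ha ▸ h4) hc0
      _ = (t*a)^(j+1) / ((j+1).factorial : ℝ) := by rw [hc, mul_pow]; ring
  have hint_nonneg : ∀ j : ℕ, 0 ≤ ∫ s in Ioc (0:ℝ) t, |u j s| := fun j =>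
    setIntegral_nonneg measurableSet_Ioc fun s _ => abs_nonneg _
  have hint_le : ∀ j : ℕ, (∫ s in Ioc (0:ℝ) t, |u j s|) ≤ b j * t := by
    intro j
    have h1 : (∫ s in Ioc (0:ℝ) t, |u j s|) ≤ ∫ _ in Ioc (0:ℝ) t, b j := by
      apply setIntegral_mono_on ((hu_cont j).abs.integrableOn_Ioc)
        (integrableOn_const measure_Ioc_lt_top.ne) measurableSet_Ioc
      intro s hs
      exact hu_bound j s ⟨le_of_lt hs.1, hs.2⟩
    rw [setIntegral_const, Real.volume_real_Ioc_of_le ht, sub_zero, smul_eq_mul,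
      mul_comm] at h1
    exact h1
  have hint_sum : Summable (fun j => ∫ s in Ioc (0:ℝ) t, |u j s|) :=
    Summable.of_nonneg_of_le hint_nonneg hint_le (hb_sum.mul_right t)
  have hexp : Real.exp (t*a) = ∑' n : ℕ, (t*a)^n / (n.factorial:ℝ) := by
    rw [Real.exp_eq_exp_ℝ, NormedSpace.exp_eq_tsum_div]
  have hshift : (∑' n : ℕ, (t*a)^n/(n.factorial:ℝ))
      = 1 + ∑' n : ℕ, (t*a)^(n+1)/((n+1).factorial:ℝ) := by
    rw [Summable.tsum_eq_zero_add (Real.summable_pow_div_factorial (t*a))]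
    norm_num
  have hfinal : (∑' j, ∫ s in Ioc (0:ℝ) t, |u j s|) ≤ Real.exp (t*a) - 1 := by
    rw [Summable.tsum_eq_zero_add hint_sum, hterm0, zero_add]
    have h5 : (∑' n : ℕ, ∫ s in Ioc (0:ℝ) t, |u (n+1) s|)
        ≤ ∑' n : ℕ, (t*a)^(n+1)/((n+1).factorial:ℝ) := by
      apply Summable.tsum_le_tsum hterm
      · exact (summable_nat_add_iff 1).2 hint_sum
      · exact (summable_nat_add_iff 1).2 (Real.summable_pow_div_factorial (t*a))
    rw [hexp, hshift]
    linarith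
  calc (∫ s in (0:ℝ)..t, |KM M t s|)
      ≤ ∫ s in Ioc (0:ℝ) t, ∑' j, |u j s| := hmono
    _ = ∑' j, ∫ s in Ioc (0:ℝ) t, |u j s| := hswap
    _ ≤ Real.exp (t*a) - 1 := hfinal

/-- weighted estimate for the flow kernel.  For `M` continuous on `[0,∞)`,
`λ ∈ ℝ` and `t ≥ 0`:
`∫_0^t e^{-λ(t-s)} |K_M(t,s)| ds ≤ exp(t ∫_0^t e^{-λτ}|M(τ)| dτ) − 1`. -/
theorem KM_weighted_estimate
    (M : ℝ → ℝ) (hM : ContinuousOn M (Set.Ici 0)) (lam : ℝ) :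
    ∀ t : ℝ, 0 ≤ t →
      (∫ s in (0:ℝ)..t, Real.exp (-lam * (t - s)) * |KM M t s|) ≤
        Real.exp (t * ∫ τ in (0:ℝ)..t, Real.exp (-lam * τ) * |M τ|) - 1 := by
  intro t ht
  set N : ℝ → ℝ := fun x => Real.exp (-lam * max x 0) * M (max x 0) with hN
  have hmax : Continuous fun x : ℝ => max x 0 := continuous_id.max continuous_const
  have hNcont : Continuous N := by
    have h2 : Continuous fun x : ℝ => M (max x 0) :=
      hM.comp_continuous hmax (fun x => le_max_right x 0)
    exact (Real.continuous_exp.comp (continuous_const.mul hmax)).mul h2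
  have hrel : ∀ j : ℕ, ∀ τ : ℝ, 0 ≤ τ →
      convPow N j τ = Real.exp (-lam * τ) * convPow M j τ := by
    intro j τ hτ
    have h1 : ∀ x : ℝ, 0 ≤ x → N x = Real.exp (-lam * x) * M x := by
      intro x hx
      rw [hN]
      dsimp only
      rw [max_eq_left hx]
    rw [convPow_congr_nonneg h1 j τ hτ, convPow_exp_smul M lam j τ]
  have hKMrel : ∀ s ∈ Icc (0:ℝ) t, KM N t s = Real.exp (-lam * (t - s)) * KM M t s := by
    intro s hs
    have hts : 0 ≤ t - s := by linarith [hs.2]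
    have : ∀ j : ℕ, ((-s) ^ j / (j.factorial : ℝ)) * convPow N j (t - s)
        = Real.exp (-lam * (t - s)) * (((-s) ^ j / (j.factorial : ℝ)) * convPow M j (t - s)) := by
      intro j
      rw [hrel j (t - s) hts]
      ring
    rw [KM]
    simp_rw [this]
    rw [tsum_mul_left]
    rfl
  have hL : (∫ s in (0:ℝ)..t, Real.exp (-lam * (t - s)) * |KM M t s|)
      = ∫ s in (0:ℝ)..t, |KM N t s| := by
    apply intervalIntegral.integral_congr
    intro s hs
    rw [uIcc_of_le ht] at hs
    show Real.exp (-lam * (t - s)) * |KM M t s| = |KM N t s|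
    rw [hKMrel s hs, abs_mul, abs_of_pos (Real.exp_pos _)]
  have hR : (∫ τ in (0:ℝ)..t, Real.exp (-lam * τ) * |M τ|)
      = ∫ τ in (0:ℝ)..t, |N τ| := by
    apply intervalIntegral.integral_congr
    intro τ hτ
    rw [uIcc_of_le ht] at hτ
    show Real.exp (-lam * τ) * |M τ| = |N τ|
    rw [hN]
    dsimp only
    rw [max_eq_left hτ.1, abs_mul, abs_of_pos (Real.exp_pos _)]
  rw [hL, hR]
  exact KM_key hNcont ht
end
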